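/- arXiv:2312.06634 — 8 statements merged into one kernel-verified Lean document; each statement's English description precedes it below -/
import Mathlib

section
/- If Θ and C are real N×n matrices such that the n×n matrix ΘᵀC + CᵀΘ − I is positive semidefinite, then det(ΘᵀC + CᵀΘ − I) ≤ (det(ΘᵀC))². -/
open Matrix

lemma psd_det_nonneg {n : ℕ} {M : Matrix (Fin n) (Fin n) ℝ} (hM : M.PosSemidef) :
    0 ≤ M.det := by
  rw [hM.1.det_eq_prod_eigenvalues]
  exact Finset.prod_nonneg fun i _ => hM.eigenvalues_nonneg i

lemma one_le_det_one_add {n : ℕ} {Q : Matrix (Fin n) (Fin n) ℝ} (hQ : Q.PosSemidef) :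
    1 ≤ (1 + Q).det := by
  have h1 : (1 + Q).PosSemidef := Matrix.PosSemidef.add (Matrix.PosSemidef.one) hQ
  rw [h1.1.det_eq_prod_eigenvalues]
  have hev : ∀ i, 1 ≤ h1.1.eigenvalues i := by
    intro i
    have hv := h1.1.eigenvalues_eq i
    set v : Fin n → ℝ := ⇑(h1.1.eigenvectorBasis i) with hvdef
    have hnorm : star v ⬝ᵥ v = 1 := by
      have := h1.1.eigenvectorBasis.orthonormal.1 i
      have h2 : (inner ℝ (h1.1.eigenvectorBasis i) (h1.1.eigenvectorBasis i) : ℝ) = 1 := by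
        rw [inner_self_eq_norm_sq_to_K, this]; norm_num
      rw [EuclideanSpace.inner_eq_star_dotProduct, dotProduct_comm] at h2; exact h2
    have hQv : 0 ≤ star v ⬝ᵥ (Q *ᵥ v) := hQ.dotProduct_mulVec_nonneg v
    rw [hv]
    simp only [add_mulVec, one_mulVec, dotProduct_add, hnorm]
    simpa using hQv
  calc (1:ℝ) = ∏ _i : Fin n, 1 := by simp
  _ ≤ ∏ i, (h1.1.eigenvalues i : ℝ) :=
      Finset.prod_le_prod (fun i _ => zero_le_one) (fun i _ => hev i)

open scoped MatrixOrder in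
lemma det_le_det_add {n : ℕ} {M R : Matrix (Fin n) (Fin n) ℝ}
    (hM : M.PosSemidef) (hR : R.PosSemidef) : M.det ≤ (M + R).det := by
  by_cases h0 : M.det = 0
  · rw [h0]
    exact psd_det_nonneg (hM.add hR)
  · set S := CFC.sqrt M with hS
    have hSS : S * S = M := CFC.sqrt_mul_sqrt_self M hM.nonneg
    have hdetS : S.det ^ 2 = M.det := by
      rw [sq, ← det_mul, hSS]
    have hSdet : S.det ≠ 0 := by
      intro h; rw [h] at hdetS; simp at hdetS; exact h0 hdetS.symm
    have hSinv : IsUnit S.det := isUnit_iff_ne_zero.mpr hSdet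
    have hQ : (S⁻¹ * R * S⁻¹ᴴ).PosSemidef := hR.mul_mul_conjTranspose_same S⁻¹
    have hSh : Sᴴ = S := (CFC.sqrt_nonneg M).posSemidef.1
    have hSinvH : S⁻¹ᴴ = S⁻¹ := by rw [Matrix.conjTranspose_nonsing_inv, hSh]
    have key : M + R = S * (1 + S⁻¹ * R * S⁻¹ᴴ) * S := by
      rw [mul_add, add_mul, mul_one, hSS, hSinvH]
      congr 1
      rw [← mul_assoc, ← mul_assoc, Matrix.mul_nonsing_inv S hSinv, one_mul, mul_assoc,
        Matrix.nonsing_inv_mul S hSinv, mul_one]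
    calc M.det = M.det * 1 := by ring
    _ ≤ M.det * (1 + S⁻¹ * R * S⁻¹ᴴ).det := by
        apply mul_le_mul_of_nonneg_left (one_le_det_one_add hQ) (psd_det_nonneg hM)
    _ = (M + R).det := by
        rw [key, det_mul, det_mul, ← hdetS]; ring

/-- If `ΘᵀC + CᵀΘ − I` is positive semidefinite, then
`det (ΘᵀC + CᵀΘ − I) ≤ (det (ΘᵀC))²`. -/
theorem det_surrogate_le_det_sq (N n : ℕ) (Θ C : Matrix (Fin N) (Fin n) ℝ)
    (h : (Θᵀ * C + Cᵀ * Θ - 1).PosSemidef) :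
    (Θᵀ * C + Cᵀ * Θ - 1).det ≤ (Θᵀ * C).det ^ 2 := by
  set A := Θᵀ * C with hA
  have hAT : Cᵀ * Θ = Aᵀ := by rw [hA, transpose_mul, transpose_transpose]
  rw [hAT] at h ⊢
  have hR : ((A - 1) * (A - 1)ᵀ).PosSemidef := by
    have := posSemidef_self_mul_conjTranspose (A - 1)
    simpa using this
  have h2 : (A - 1)ᵀ = Aᵀ - 1 := by simp
  have key : (A + Aᵀ - 1) + (A - 1) * (A - 1)ᵀ = A * Aᵀ := by
    rw [h2]; noncomm_ring
  have hle := det_le_det_add h hR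
  rw [key] at hle
  calc (A + Aᵀ - 1).det ≤ (A * Aᵀ).det := hle
  _ = A.det ^ 2 := by rw [det_mul, det_transpose, sq]
end

section
/- If Θ and C are real N×n matrices such that G := ΘᵀC + CᵀΘ − I is positive definite, then max{0, −log det G} ≥ 2(1 − |det(ΘᵀC)|). -/
open Matrix

open scoped MatrixOrder in
lemma det_mono_aux {m : ℕ} {A B : Matrix (Fin m) (Fin m) ℝ}
    (hA : A.PosDef) (hBA : (B - A).PosSemidef) : A.det ≤ B.det := by
  classical
  set S := CFC.sqrt A with hS
  have hSps : S.PosSemidef := (CFC.sqrt_nonneg A).posSemidef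
  have hSS : S * S = A := CFC.sqrt_mul_sqrt_self A hA.posSemidef.nonneg
  have hdetS : S.det * S.det = A.det := by
    rw [← det_mul, hSS]
  have hdetA : 0 < A.det := hA.det_pos
  have hSdet : S.det ≠ 0 := by
    intro h0
    rw [h0, zero_mul] at hdetS
    exact hdetA.ne hdetS
  have hSinv : S * S⁻¹ = 1 := mul_nonsing_inv S (isUnit_iff_ne_zero.mpr hSdet)
  have hSinv' : S⁻¹ * S = 1 := nonsing_inv_mul S (isUnit_iff_ne_zero.mpr hSdet)
  have hSinvH : S⁻¹ᴴ = S⁻¹ := by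
    rw [conjTranspose_nonsing_inv, hSps.1]
  set D := S⁻¹ * B * S⁻¹ with hD
  have hD1 : D - 1 = S⁻¹ * (B - A) * S⁻¹ᴴ := by
    rw [hSinvH, hD, Matrix.mul_sub, Matrix.sub_mul]
    congr 1
    symm
    calc S⁻¹ * A * S⁻¹ = S⁻¹ * (S * S) * S⁻¹ := by rw [hSS]
      _ = (S⁻¹ * S) * (S * S⁻¹) := by simp only [Matrix.mul_assoc]
      _ = 1 := by rw [hSinv', hSinv, Matrix.one_mul]
  have hD1ps : (D - 1).PosSemidef := hD1 ▸ hBA.mul_mul_conjTranspose_same S⁻¹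
  have hDH : D.IsHermitian := by
    have : D = S⁻¹ * B * S⁻¹ᴴ := by rw [hSinvH]
    rw [this]
    have hBH : B.IsHermitian := by
      have := hD1ps.1
      have h1 : (D - 1).IsHermitian := hD1ps.1
      have hDH' : D.IsHermitian := by
        have := h1.add (isHermitian_one)
        simpa using this
      -- B = S * D * S
      have : B = S * D * S := by
        calc B = 1 * B * 1 := by rw [Matrix.one_mul, Matrix.mul_one]
          _ = (S * S⁻¹) * B * (S⁻¹ * S) := by rw [hSinv, hSinv']
          _ = S * D * S := by simp only [hD, Matrix.mul_assoc]
      rw [this]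
      have : S * D * S = S * D * Sᴴ := by rw [hSps.1]
      rw [this]
      exact isHermitian_mul_mul_conjTranspose S hDH'
    exact isHermitian_mul_mul_conjTranspose S⁻¹ hBH
  -- each eigenvalue of D is ≥ 1
  have heig : ∀ i, 1 ≤ hDH.eigenvalues i := by
    intro i
    set v := ⇑(hDH.eigenvectorBasis i) with hv
    have hnonneg := hD1ps.dotProduct_mulVec_nonneg v
    have hvnorm : (star v) ⬝ᵥ v = (1 : ℝ) := by
      have := hDH.eigenvectorBasis.orthonormal.1 i
      have h2 : (inner ℝ (hDH.eigenvectorBasis i) (hDH.eigenvectorBasis i) : ℝ) =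
          (star v) ⬝ᵥ v := by rw [EuclideanSpace.inner_eq_star_dotProduct, dotProduct_comm]
      rw [← h2]
      rw [@inner_self_eq_norm_sq_to_K ℝ] at *
      rw [this]; norm_num
    have hsub : (star v) ⬝ᵥ ((D - 1) *ᵥ v) =
        (star v) ⬝ᵥ (D *ᵥ v) - 1 := by
      rw [Matrix.sub_mulVec, dotProduct_sub, Matrix.one_mulVec, hvnorm]
    rw [hsub] at hnonneg
    have heq := hDH.eigenvalues_eq i
    simp only [RCLike.re_to_real] at heq hnonneg
    rw [← hv] at heq
    linarith [hnonneg, heq.symm.le]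
  have hdetD : 1 ≤ D.det := by
    have := hDH.det_eq_prod_eigenvalues
    simp only [RCLike.ofReal_real_eq_id, id] at this
    rw [this]
    calc (1:ℝ) = ∏ _i : Fin m, 1 := by simp
      _ ≤ ∏ i, hDH.eigenvalues i :=
        Finset.prod_le_prod (fun i _ => zero_le_one) (fun i _ => heig i)
  have hBdet : B.det = A.det * D.det := by
    have hB : B = S * D * S := by
      calc B = 1 * B * 1 := by rw [Matrix.one_mul, Matrix.mul_one]
        _ = (S * S⁻¹) * B * (S⁻¹ * S) := by rw [hSinv, hSinv']
        _ = S * D * S := by simp only [hD, Matrix.mul_assoc]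
    rw [hB, det_mul, det_mul, ← hdetS]; ring
  rw [hBdet]
  nlinarith [hdetA, hdetD]

/-- If `G := ΘᵀC + CᵀΘ − I` is positive definite, then
`max {0, −log det G} ≥ 2 (1 − |det (ΘᵀC)|)`. -/
theorem barrier_term_lower_bound (N n : ℕ) (Θ C : Matrix (Fin N) (Fin n) ℝ)
    (h : (Θᵀ * C + Cᵀ * Θ - 1).PosDef) :
    2 * (1 - |(Θᵀ * C).det|) ≤ max 0 (-Real.log (Θᵀ * C + Cᵀ * Θ - 1).det) := by
  classical
  set M := Θᵀ * C with hM
  set G := Θᵀ * C + Cᵀ * Θ - 1 with hG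
  have hMT : Cᵀ * Θ = Mᵀ := by rw [hM, transpose_mul, transpose_transpose]
  have hdiff : Mᵀ * M - G = (M - 1)ᴴ * (M - 1) := by
    have : (M - 1)ᴴ = Mᵀ - 1 := by
      simp [conjTranspose_sub, conjTranspose_one]
    rw [this, hG, hMT, ← hM]
    noncomm_ring
  have hps : (Mᵀ * M - G).PosSemidef := by
    rw [hdiff]; exact posSemidef_conjTranspose_mul_self _
  have hdet : G.det ≤ (Mᵀ * M).det := det_mono_aux h hps
  have hMM : (Mᵀ * M).det = M.det ^ 2 := by
    rw [det_mul, det_transpose]; ring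
  have hGpos : 0 < G.det := h.det_pos
  have hMpos : 0 < |M.det| := by
    rw [abs_pos]
    intro h0
    rw [hMM, h0] at hdet
    nlinarith
  have h1 : -Real.log G.det ≥ 2 * (1 - |M.det|) := by
    have hlog : Real.log G.det ≤ Real.log (|M.det| ^ 2) := by
      apply Real.log_le_log hGpos
      rw [← abs_pow, ← hMM]
      calc G.det ≤ (Mᵀ * M).det := hdet
        _ ≤ |(Mᵀ * M).det| := le_abs_self _
    have hsq : Real.log (|M.det| ^ 2) = 2 * Real.log |M.det| := by
      rw [Real.log_pow]; push_cast; ring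
    have hle : Real.log |M.det| ≤ |M.det| - 1 := Real.log_le_sub_one_of_pos hMpos
    rw [hsq] at hlog
    linarith
  calc 2 * (1 - |M.det|) ≤ -Real.log G.det := h1
    _ ≤ max 0 (-Real.log G.det) := le_max_right _ _
end

section
/- Let μ > 0, J∘ ≥ 0, Θ a real N×n matrix, and C⁽¹⁾, …, C⁽ᴹ⁾ real N×n matrices such that each G⁽ⁱ⁾ := ΘᵀC⁽ⁱ⁾ + C⁽ⁱ⁾ᵀΘ − I is positive definite. If (μ/M)·Σ_{i=1}^{M} max{0, −log det G⁽ⁱ⁾} ≤ J∘, then (1/M)·Σ_{i=1}^{M} (1 − |det(ΘᵀC⁽ⁱ⁾)|) ≤ J∘/(2μ). -/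
open Matrix

private lemma one_le_det_one_add_s3 {k : ℕ} {M : Matrix (Fin k) (Fin k) ℝ} (hM : M.PosSemidef) :
    (1 : ℝ) ≤ (1 + M).det := by
  have hH : (1 + M).IsHermitian := isHermitian_one.add hM.isHermitian
  have h1 : ∀ i, 1 ≤ hH.eigenvalues i := by
    intro i
    rw [hH.eigenvalues_eq]
    set v := hH.eigenvectorBasis i with hv
    have hsplit : dotProduct (star ⇑v) ((1 + M) *ᵥ ⇑v)
        = dotProduct (star ⇑v) ((1 : Matrix (Fin k) (Fin k) ℝ) *ᵥ ⇑v)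
          + dotProduct (star ⇑v) (M *ᵥ ⇑v) := by
      rw [add_mulVec, dotProduct_add]
    have hunit : dotProduct (star ⇑v) ((1 : Matrix (Fin k) (Fin k) ℝ) *ᵥ ⇑v) = 1 := by
      rw [one_mulVec, dotProduct_comm, ← EuclideanSpace.inner_eq_star_dotProduct, real_inner_self_eq_norm_sq,
        hH.eigenvectorBasis.orthonormal.1 i]
      norm_num
    have hnn := hM.re_dotProduct_nonneg ⇑v
    simp only [RCLike.re_to_real] at hnn ⊢
    rw [hsplit, hunit]
    linarith
  have hdet := hH.det_eq_prod_eigenvalues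
  push_cast at hdet
  rw [hdet]
  have := Finset.prod_le_prod (s := Finset.univ) (f := fun _ => (1:ℝ)) (g := hH.eigenvalues)
    (fun i _ => zero_le_one) (fun i _ => h1 i)
  simpa using this

open scoped MatrixOrder in
private lemma det_le_det_add_s3 {k : ℕ} {A B : Matrix (Fin k) (Fin k) ℝ}
    (hA : A.PosDef) (hB : B.PosSemidef) : A.det ≤ (A + B).det := by
  set R := CFC.sqrt A with hR
  have hRps : R.PosSemidef := (CFC.sqrt_nonneg A).posSemidef
  have hRR : R * R = A := CFC.sqrt_mul_sqrt_self A hA.posSemidef.nonneg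
  have hdetA : 0 < A.det := hA.det_pos
  have hdetR : R.det ≠ 0 := by
    intro h
    rw [← hRR, det_mul, h, mul_zero] at hdetA
    exact lt_irrefl _ hdetA
  have hRsym : Rᵀ = R := hRps.isHermitian
  have hRinv_sym : (R⁻¹)ᵀ = R⁻¹ := by
    rw [transpose_nonsing_inv, hRsym]
  have hM : (R⁻¹ * B * R⁻¹).PosSemidef := by
    have := hB.mul_mul_conjTranspose_same R⁻¹
    simpa [conjTranspose_eq_transpose_of_trivial, hRinv_sym] using this
  have key : A + B = R * (1 + R⁻¹ * B * R⁻¹) * R := by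
    have hRi : R * R⁻¹ = 1 := mul_nonsing_inv R (isUnit_iff_ne_zero.mpr hdetR)
    have hiR : R⁻¹ * R = 1 := nonsing_inv_mul R (isUnit_iff_ne_zero.mpr hdetR)
    rw [Matrix.mul_add, Matrix.add_mul, Matrix.mul_one, hRR]
    congr 1
    rw [← Matrix.mul_assoc, ← Matrix.mul_assoc, hRi, Matrix.one_mul, Matrix.mul_assoc, hiR,
      Matrix.mul_one]
  have h1 : (1 : ℝ) ≤ (1 + R⁻¹ * B * R⁻¹).det := one_le_det_one_add_s3 hM
  calc A.det = A.det * 1 := (mul_one _).symm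
    _ ≤ A.det * (1 + R⁻¹ * B * R⁻¹).det := by
        exact mul_le_mul_of_nonneg_left h1 hdetA.le
    _ = (A + B).det := by
        rw [key, det_mul, det_mul, ← hRR, det_mul]; ring

/-- If each `G⁽ⁱ⁾ := ΘᵀC⁽ⁱ⁾ + C⁽ⁱ⁾ᵀΘ − I` is positive definite and the barrier term
`(μ/M) Σᵢ max {0, −log det G⁽ⁱ⁾}` is at most `J∘`, then
`(1/M) Σᵢ (1 − |det (ΘᵀC⁽ⁱ⁾)|) ≤ J∘ / (2μ)`. -/
theorem barrier_bounds_avg_det (N n M : ℕ) (hM : 0 < M) (μ J₀ : ℝ) (hμ : 0 < μ) (hJ : 0 ≤ J₀)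
    (Θ : Matrix (Fin N) (Fin n) ℝ) (C : Fin M → Matrix (Fin N) (Fin n) ℝ)
    (hpos : ∀ i, (Θᵀ * C i + (C i)ᵀ * Θ - 1).PosDef)
    (hbar : (μ / M) * ∑ i, max 0 (-Real.log (Θᵀ * C i + (C i)ᵀ * Θ - 1).det) ≤ J₀) :
    (1 / M : ℝ) * ∑ i, (1 - |(Θᵀ * C i).det|) ≤ J₀ / (2 * μ) := by
  set S : Fin M → Matrix (Fin n) (Fin n) ℝ := fun i => Θᵀ * C i with hS
  set G : Fin M → Matrix (Fin n) (Fin n) ℝ := fun i => Θᵀ * C i + (C i)ᵀ * Θ - 1 with hG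
  -- pointwise bound: 1 - |det (S i)| ≤ (1/2) * max 0 (-log (det (G i)))
  have hpt : ∀ i, 1 - |(S i).det| ≤ (1 / 2) * max 0 (-Real.log (G i).det) := by
    intro i
    have hGd : 0 < (G i).det := (hpos i).det_pos
    -- SᵀS = G + (S - 1)ᵀ(S - 1)
    have hdecomp : (S i)ᵀ * S i = G i + (S i - 1)ᵀ * (S i - 1) := by
      have hST : (S i)ᵀ = (C i)ᵀ * Θ := by rw [hS, transpose_mul, transpose_transpose]
      rw [hG, hST]
      rw [transpose_sub, transpose_one, Matrix.sub_mul, Matrix.mul_sub, Matrix.mul_sub,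
        Matrix.one_mul, Matrix.mul_one, hST]
      noncomm_ring
    have hpsd : ((S i - 1)ᵀ * (S i - 1)).PosSemidef := posSemidef_conjTranspose_mul_self _
    have hle : (G i).det ≤ ((S i)ᵀ * S i).det := by
      rw [hdecomp]; exact det_le_det_add_s3 (hpos i) hpsd
    have hsq : ((S i)ᵀ * S i).det = (S i).det ^ 2 := by
      rw [det_mul, det_transpose, sq]
    have habs : Real.sqrt ((G i).det) ≤ |(S i).det| := by
      rw [← Real.sqrt_sq_eq_abs]
      exact Real.sqrt_le_sqrt (by rw [← hsq]; exact hle)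
    have hsqrt_pos : 0 < Real.sqrt ((G i).det) := Real.sqrt_pos.mpr hGd
    have hlog : 1 - Real.sqrt ((G i).det) ≤ -Real.log (Real.sqrt ((G i).det)) := by
      have := Real.log_le_sub_one_of_pos hsqrt_pos
      linarith
    have hloghalf : Real.log (Real.sqrt ((G i).det)) = (1 / 2) * Real.log ((G i).det) := by
      rw [Real.log_sqrt hGd.le]; ring
    have hmax : -Real.log ((G i).det) ≤ max 0 (-Real.log ((G i).det)) := le_max_right _ _
    calc 1 - |(S i).det| ≤ 1 - Real.sqrt ((G i).det) := by linarith
      _ ≤ -Real.log (Real.sqrt ((G i).det)) := hlog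
      _ = (1 / 2) * (-Real.log ((G i).det)) := by rw [hloghalf]; ring
      _ ≤ (1 / 2) * max 0 (-Real.log ((G i).det)) := by linarith
  have hMpos : (0 : ℝ) < M := by exact_mod_cast hM
  have hsum : ∑ i, (1 - |(S i).det|) ≤ (1 / 2) * ∑ i, max 0 (-Real.log (G i).det) := by
    rw [Finset.mul_sum]
    exact Finset.sum_le_sum fun i _ => hpt i
  have key : (1 / M : ℝ) * ∑ i, (1 - |(S i).det|)
      ≤ (1 / (2 * μ)) * ((μ / M) * ∑ i, max 0 (-Real.log (G i).det)) := by
    have h2 : (1 / (2 * μ)) * ((μ / M) * ∑ i, max 0 (-Real.log (G i).det))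
        = (1 / M) * ((1 / 2) * ∑ i, max 0 (-Real.log (G i).det)) := by
      field_simp
    rw [h2]
    exact mul_le_mul_of_nonneg_left hsum (by positivity)
  calc (1 / M : ℝ) * ∑ i, (1 - |(S i).det|)
      ≤ (1 / (2 * μ)) * ((μ / M) * ∑ i, max 0 (-Real.log (G i).det)) := key
    _ ≤ (1 / (2 * μ)) * J₀ := mul_le_mul_of_nonneg_left hbar (by positivity)
    _ = J₀ / (2 * μ) := by ring
end

section
/- Given data matrices Φ_0, …, Φ_P ∈ ℝ^{M×N}, matrices C⁽¹⁾, …, C⁽ᴹ⁾ ∈ ℝ^{N×n}, a matrix Ā ∈ ℝ^{n×n}, and constants β ≥ 0 and μ > 0, suppose Θ ∈ ℝ^{N×n} is such that each ΘᵀC⁽ⁱ⁾ + C⁽ⁱ⁾ᵀΘ − I is positive definite and J_μ(Θ) ≤ J∘ for some J∘ with 0 ≤ J∘ < 2μ. Then the denominator (1/M)·Σ_{i=1}^{M} |det(ΘᵀC⁽ⁱ⁾)| is at least 1 − J∘/(2μ) > 0, and the scaled error satisfies L(Θ) ≤ √(2J∘) / (1 − J∘/(2μ)). -/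
open Matrix

/-- Squared Frobenius norm of a real matrix: `‖X‖_F² = Σᵢⱼ Xᵢⱼ²`. -/
noncomputable def frobSq {m n : ℕ} (X : Matrix (Fin m) (Fin n) ℝ) : ℝ :=
  ∑ i, ∑ j, X i j ^ 2

/-- The regularized barrier objective
`J_μ(Θ) = (1/(2MP)) Σₖ ‖Φ_kΘ − Φ_{k−1}ΘĀᵀ‖_F² + (β/2)‖Θ‖_F²
  + (μ/M) Σᵢ max{0, −log det(ΘᵀC⁽ⁱ⁾ + C⁽ⁱ⁾ᵀΘ − I)}`. -/
noncomputable def Jobj (M N n P : ℕ) (Φ : ℕ → Matrix (Fin M) (Fin N) ℝ)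
    (C : Fin M → Matrix (Fin N) (Fin n) ℝ) (Abar : Matrix (Fin n) (Fin n) ℝ)
    (β μ : ℝ) (Θ : Matrix (Fin N) (Fin n) ℝ) : ℝ :=
  (1 / (2 * M * P)) * ∑ k ∈ Finset.range P, frobSq (Φ (k + 1) * Θ - Φ k * Θ * Abarᵀ)
    + (β / 2) * frobSq Θ
    + (μ / M) * ∑ i, max 0 (-Real.log (Θᵀ * C i + (C i)ᵀ * Θ - 1).det)

/-- The scaled error
`L(Θ) = [ (1/(MP)) Σₖ ‖Φ_kΘ − Φ_{k−1}ΘĀᵀ‖_F² ]^{1/2} / [ (1/M) Σᵢ |det(ΘᵀC⁽ⁱ⁾)| ]`. -/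
noncomputable def Lscaled (M N n P : ℕ) (Φ : ℕ → Matrix (Fin M) (Fin N) ℝ)
    (C : Fin M → Matrix (Fin N) (Fin n) ℝ) (Abar : Matrix (Fin n) (Fin n) ℝ)
    (Θ : Matrix (Fin N) (Fin n) ℝ) : ℝ :=
  Real.sqrt ((1 / (M * P)) * ∑ k ∈ Finset.range P, frobSq (Φ (k + 1) * Θ - Φ k * Θ * Abarᵀ))
    / ((1 / M : ℝ) * ∑ i, |(Θᵀ * C i).det|)


lemma det_one_add_psd {k : Type*} [Fintype k] [DecidableEq k] {A : Matrix k k ℝ}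
    (hA : A.PosSemidef) : 1 ≤ (1 + A).det := by
  set U : Matrix k k ℝ := (hA.1.eigenvectorUnitary : Matrix k k ℝ) with hUdef
  set D : Matrix k k ℝ := diagonal (RCLike.ofReal ∘ hA.1.eigenvalues) with hDdef
  have hU : U * star U = 1 := (Matrix.mem_unitaryGroup_iff).mp hA.1.eigenvectorUnitary.2
  have hspec : A = U * D * star U := hA.1.spectral_theorem
  have key : U * (1 + D) * star U = 1 + A := by
    rw [mul_add, mul_one, add_mul, hU, ← hspec]
  have hUU : U.det * (star U).det = 1 := by rw [← det_mul, hU, det_one]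
  have hdet : (1 + A).det = (1 + D).det := by
    rw [← key, det_mul, det_mul]
    calc U.det * (1 + D).det * (star U).det
        = (1 + D).det * (U.det * (star U).det) := by ring
      _ = (1 + D).det := by rw [hUU, mul_one]
  rw [hdet, hDdef, ← diagonal_one, diagonal_add, det_diagonal]
  calc (1:ℝ) = ∏ _i : k, 1 := by simp
    _ ≤ _ := Finset.prod_le_prod (fun i _ => zero_le_one) (fun i _ => by
        have := hA.eigenvalues_nonneg i
        simp only [Pi.add_apply, Pi.one_apply, Function.comp_apply,
          RCLike.ofReal_real_eq_id, id]
        linarith)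


lemma posDef_smul {k : Type*} [Fintype k] [DecidableEq k] {A : Matrix k k ℝ}
    (hA : A.PosDef) {c : ℝ} (hc : 0 < c) : (c • A).PosDef := by
  refine ⟨?_, fun x hx => ?_⟩
  · unfold Matrix.IsHermitian
    rw [conjTranspose_smul, hA.1]
    simp
  · exact (hA.smul hc).2 hx


open scoped MatrixOrder in
lemma det_le_det_of_sub_psd {k : Type*} [Fintype k] [DecidableEq k] {A B : Matrix k k ℝ}
    (hB : B.PosDef) (hAB : (A - B).PosSemidef) : B.det ≤ A.det := by
  set R := CFC.sqrt B with hRdef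
  have hR : R.PosSemidef := (CFC.sqrt_nonneg B).posSemidef
  have hRR : R * R = B := CFC.sqrt_mul_sqrt_self B hB.posSemidef.nonneg
  have hdetR : R.det * R.det = B.det := by rw [← det_mul, hRR]
  have hdB : 0 < B.det := hB.det_pos
  have hdR : R.det ≠ 0 := by
    intro h; rw [h, mul_zero] at hdetR; exact hdB.ne' hdetR.symm
  have hunit : IsUnit R.det := hdR.isUnit
  have hinvmul : R⁻¹ * R = 1 := nonsing_inv_mul R hunit
  have hmulinv : R * R⁻¹ = 1 := mul_nonsing_inv R hunit
  have hRinvh : (R⁻¹)ᴴ = R⁻¹ := by rw [conjTranspose_nonsing_inv, hR.1]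
  have hB1 : R⁻¹ * B * R⁻¹ = 1 := by
    rw [← hRR, ← mul_assoc R⁻¹ R R, hinvmul, one_mul, hmulinv]
  have hM1 : R⁻¹ * A * R⁻¹ = 1 + R⁻¹ * (A - B) * R⁻¹ := by
    rw [mul_sub, sub_mul, hB1]
    abel
  have hpsd : (R⁻¹ * (A - B) * R⁻¹).PosSemidef := by
    have := hAB.conjTranspose_mul_mul_same R⁻¹
    rwa [hRinvh] at this
  have hdetM : 1 ≤ (R⁻¹ * A * R⁻¹).det := by
    rw [hM1]; exact det_one_add_psd hpsd
  have hexp : (R⁻¹ * A * R⁻¹).det = A.det / B.det := by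
    rw [det_mul, det_mul, det_nonsing_inv, Ring.inverse_eq_inv, ← hdetR]
    field_simp
  rw [hexp] at hdetM
  exact (one_le_div hdB).mp hdetM

open scoped MatrixOrder in
lemma sqrt_det_le_abs_det {k : Type*} [Fintype k] [DecidableEq k] {B : Matrix k k ℝ}
    (hS : (B + Bᵀ - 1).PosDef) : Real.sqrt (B + Bᵀ - 1).det ≤ |B.det| := by
  set S : Matrix k k ℝ := B + Bᵀ - 1 with hSdef
  have hBBt : (B + Bᵀ).PosDef := by
    have : (S + 1).PosDef := hS.add_posSemidef Matrix.PosSemidef.one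
    rwa [hSdef, sub_add_cancel] at this
  set H : Matrix k k ℝ := (2⁻¹ : ℝ) • (B + Bᵀ) with hHdef
  have hH : H.PosDef := posDef_smul hBBt (by norm_num)
  have hHh : Hᴴ = H := hH.1
  -- square root of H
  set R := CFC.sqrt H with hRdef
  have hR : R.PosSemidef := (CFC.sqrt_nonneg H).posSemidef
  have hRR : R * R = H := CFC.sqrt_mul_sqrt_self H hH.posSemidef.nonneg
  have hdetR : R.det * R.det = H.det := by rw [← det_mul, hRR]
  have hdH : 0 < H.det := hH.det_pos
  have hdR : R.det ≠ 0 := by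
    intro h; rw [h, mul_zero] at hdetR; exact hdH.ne' hdetR.symm
  have hunit : IsUnit R.det := hdR.isUnit
  have hinvmul : R⁻¹ * R = 1 := nonsing_inv_mul R hunit
  have hmulinv : R * R⁻¹ = 1 := mul_nonsing_inv R hunit
  have hRt : Rᵀ = R := by
    rw [← conjTranspose_eq_transpose_of_trivial, hR.1]
  have hRinvT : (R⁻¹)ᵀ = R⁻¹ := by rw [transpose_nonsing_inv, hRt]
  -- skew part
  set K : Matrix k k ℝ := B - H with hKdef
  have h2H : H + H = B + Bᵀ := by
    rw [hHdef]; module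
  have hKt : Kᵀ = -K := by
    have hHt : Hᵀ = H := by rw [← conjTranspose_eq_transpose_of_trivial, hHh]
    rw [hKdef, transpose_sub, hHt]
    have : B + Bᵀ = H + H := h2H.symm
    rw [neg_sub]
    -- goal: Bᵀ - H = H - B
    have : Bᵀ = H + H - B := by rw [h2H]; abel
    rw [this]; abel
  set S' : Matrix k k ℝ := R⁻¹ * K * R⁻¹ with hS'def
  have hS't : S'ᵀ = -S' := by
    rw [hS'def, transpose_mul, transpose_mul, hRinvT, hKt]
    simp [mul_assoc]
  have hRS'R : R * S' * R = K := by
    rw [hS'def, ← mul_assoc R (R⁻¹ * K) R⁻¹, ← mul_assoc R R⁻¹ K, hmulinv, one_mul,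
      mul_assoc K R⁻¹ R, hinvmul, mul_one]
  have hBdec : B = R * (1 + S') * R := by
    rw [mul_add, mul_one, add_mul, hRR, hRS'R, hKdef]; abel
  have hdetB : B.det = H.det * (1 + S').det := by
    rw [hBdec, det_mul, det_mul]
    rw [← hdetR]; ring
  -- |det(1 + S')| ≥ 1
  have hsq : (1 + S').det * (1 + S').det = (1 + S' * S'ᵀ).det := by
    calc (1 + S').det * (1 + S').det
        = ((1 + S')ᵀ).det * (1 + S').det := by rw [det_transpose]
      _ = ((1 + S')ᵀ * (1 + S')).det := (det_mul _ _).symm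
      _ = (1 + S' * S'ᵀ).det := by
          rw [transpose_add, transpose_one, hS't]
          congr 1
          noncomm_ring
  have hpsdSS : (S' * S'ᵀ).PosSemidef := by
    have := Matrix.posSemidef_self_mul_conjTranspose S'
    rwa [conjTranspose_eq_transpose_of_trivial] at this
  have habs : 1 ≤ |(1 + S').det| := by
    have h1 : 1 ≤ (1 + S' * S'ᵀ).det := det_one_add_psd hpsdSS
    rw [← hsq] at h1
    nlinarith [abs_nonneg ((1 + S').det), abs_mul_abs_self ((1 + S').det)]
  have hHB : H.det ≤ |B.det| := by
    calc H.det = H.det * 1 := (mul_one _).symm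
      _ ≤ H.det * |(1 + S').det| := by
          exact mul_le_mul_of_nonneg_left habs hdH.le
      _ = |H.det * (1 + S').det| := by rw [abs_mul, abs_of_pos hdH]
      _ = |B.det| := by rw [← hdetB]
  -- det S ≤ (det H)^2
  have hfac : H * H - S = (H - 1) * (H - 1) := by
    have hSH : S = H + H - 1 := by rw [hSdef, h2H]
    rw [hSH]; noncomm_ring
  have hG : (H - 1).IsHermitian := hH.1.sub isHermitian_one
  have hGpsd : ((H - 1) * (H - 1)).PosSemidef := by
    have := Matrix.posSemidef_self_mul_conjTranspose (H - 1)
    rwa [hG.eq] at this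
  have hdetHH : S.det ≤ (H * H).det := by
    apply det_le_det_of_sub_psd hS
    rw [hfac]; exact hGpsd
  have hdetHH' : S.det ≤ H.det * H.det := by rwa [det_mul] at hdetHH
  calc Real.sqrt S.det ≤ Real.sqrt (H.det * H.det) := Real.sqrt_le_sqrt hdetHH'
    _ = H.det := by rw [Real.sqrt_mul_self hdH.le]
    _ ≤ |B.det| := hHB

lemma det_lower_bound {k : Type*} [Fintype k] [DecidableEq k] {B : Matrix k k ℝ}
    (h : (B + Bᵀ - 1).PosDef) :
    1 - max 0 (-Real.log (B + Bᵀ - 1).det) / 2 ≤ |B.det| := by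
  set t := max 0 (-Real.log (B + Bᵀ - 1).det) with htdef
  set d := (B + Bᵀ - 1).det with hddef
  have hd : 0 < d := h.det_pos
  have hlog : -t ≤ Real.log d := by
    have := le_max_right 0 (-Real.log d)
    rw [← htdef] at this; linarith
  have hexp : Real.exp (-t) ≤ d := by
    rw [← Real.exp_log hd]; exact Real.exp_le_exp.mpr hlog
  have h1 : Real.exp (-t / 2) ≤ Real.sqrt d := by
    rw [Real.exp_half]
    exact Real.sqrt_le_sqrt hexp
  have h2 : 1 - t / 2 ≤ Real.exp (-t / 2) := by
    have := Real.add_one_le_exp (-t / 2); linarith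
  have h3 : Real.sqrt d ≤ |B.det| := sqrt_det_le_abs_det h
  linarith

lemma frobSq_nonneg {m n : ℕ} (X : Matrix (Fin m) (Fin n) ℝ) : 0 ≤ frobSq X :=
  Finset.sum_nonneg fun _ _ => Finset.sum_nonneg fun _ _ => sq_nonneg _

/-- If each `ΘᵀC⁽ⁱ⁾ + C⁽ⁱ⁾ᵀΘ − I` is positive definite and `J_μ(Θ) ≤ J∘ < 2μ`, then the
denominator `(1/M) Σᵢ |det(ΘᵀC⁽ⁱ⁾)|` is at least `1 − J∘/(2μ) > 0` and
`L(Θ) ≤ √(2J∘) / (1 − J∘/(2μ))`. -/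
theorem scaled_error_bound (M N n P : ℕ) (hM : 0 < M) (hP : 0 < P)
    (Φ : ℕ → Matrix (Fin M) (Fin N) ℝ) (C : Fin M → Matrix (Fin N) (Fin n) ℝ)
    (Abar : Matrix (Fin n) (Fin n) ℝ) (β μ J₀ : ℝ) (hβ : 0 ≤ β) (hμ : 0 < μ)
    (hJ₀ : 0 ≤ J₀) (hJμ : J₀ < 2 * μ) (Θ : Matrix (Fin N) (Fin n) ℝ)
    (hpos : ∀ i, (Θᵀ * C i + (C i)ᵀ * Θ - 1).PosDef)
    (hobj : Jobj M N n P Φ C Abar β μ Θ ≤ J₀) :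
    0 < 1 - J₀ / (2 * μ) ∧
    1 - J₀ / (2 * μ) ≤ (1 / M : ℝ) * ∑ i, |(Θᵀ * C i).det| ∧
    Lscaled M N n P Φ C Abar Θ ≤ Real.sqrt (2 * J₀) / (1 - J₀ / (2 * μ)) := by
  have hM' : (0:ℝ) < M := by exact_mod_cast hM
  have hP' : (0:ℝ) < P := by exact_mod_cast hP
  -- notation
  set Q : ℝ := ∑ k ∈ Finset.range P, frobSq (Φ (k + 1) * Θ - Φ k * Θ * Abarᵀ) with hQdef
  set T : ℝ := ∑ i, max 0 (-Real.log (Θᵀ * C i + (C i)ᵀ * Θ - 1).det) with hTdef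
  set D : ℝ := ∑ i, |(Θᵀ * C i).det| with hDdef
  have hQ0 : 0 ≤ Q := Finset.sum_nonneg fun _ _ => frobSq_nonneg _
  have hT0 : 0 ≤ T := Finset.sum_nonneg fun _ _ => le_max_left _ _
  have hobj' : (1 / (2 * M * P)) * Q + (β / 2) * frobSq Θ + (μ / M) * T ≤ J₀ := by
    rw [Jobj] at hobj
    exact hobj
  have hterm1 : 0 ≤ (1 / (2 * (M:ℝ) * P)) * Q := by positivity
  have hterm2 : 0 ≤ (β / 2) * frobSq Θ := mul_nonneg (by linarith) (frobSq_nonneg _)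
  have hterm3 : 0 ≤ (μ / (M:ℝ)) * T := mul_nonneg (by positivity) hT0
  -- first conjunct
  have hfrac : J₀ / (2 * μ) < 1 := (div_lt_one (by linarith)).mpr hJμ
  have hc1 : 0 < 1 - J₀ / (2 * μ) := by linarith
  -- denominator bound
  have hμT : μ / M * T ≤ J₀ := by linarith
  have hμT' : μ * T ≤ J₀ * M := by
    have h := mul_le_mul_of_nonneg_right hμT hM'.le
    have he : μ / (M:ℝ) * T * M = μ * T := by field_simp
    linarith [he ▸ h]
  have hDi : ∀ i : Fin M, 1 - max 0 (-Real.log (Θᵀ * C i + (C i)ᵀ * Θ - 1).det) / 2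
      ≤ |(Θᵀ * C i).det| := by
    intro i
    have hform : (C i)ᵀ * Θ = (Θᵀ * C i)ᵀ := by
      rw [transpose_mul, transpose_transpose]
    rw [hform]
    exact det_lower_bound (by rw [← hform]; exact hpos i)
  have hDsum : (M:ℝ) - T / 2 ≤ D := by
    have h := Finset.sum_le_sum (fun i (_ : i ∈ Finset.univ) => hDi i)
    have he : ∑ i : Fin M, (1 - max 0 (-Real.log (Θᵀ * C i + (C i)ᵀ * Θ - 1).det) / 2)
        = (M:ℝ) - T / 2 := by
      rw [Finset.sum_sub_distrib, Finset.sum_const, Finset.card_univ, Fintype.card_fin,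
        ← Finset.sum_div, ← hTdef]
      simp
    rw [he] at h
    exact h
  have hden : 1 - J₀ / (2 * μ) ≤ (1 / M : ℝ) * D := by
    have h4 : (1/(M:ℝ)) * ((M:ℝ) - T / 2) ≤ (1/(M:ℝ)) * D :=
      mul_le_mul_of_nonneg_left hDsum (by positivity)
    have h5 : (1/(M:ℝ)) * ((M:ℝ) - T / 2) = 1 - T / (2 * M) := by
      field_simp
    have h6 : T / (2 * (M:ℝ)) ≤ J₀ / (2 * μ) := by
      rw [div_le_div_iff₀ (by positivity) (by positivity)]
      nlinarith
    linarith
  -- numerator bound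
  have hnum1 : (1 / (2 * (M:ℝ) * P)) * Q ≤ J₀ := by linarith
  have hnum2 : (1 / ((M:ℝ) * P)) * Q ≤ 2 * J₀ := by
    have he : (1 / ((M:ℝ) * P)) * Q = 2 * ((1 / (2 * (M:ℝ) * P)) * Q) := by
      field_simp
    rw [he]; linarith
  have hnum : Real.sqrt ((1 / ((M:ℝ) * P)) * Q) ≤ Real.sqrt (2 * J₀) :=
    Real.sqrt_le_sqrt hnum2
  refine ⟨hc1, hden, ?_⟩
  rw [Lscaled]
  exact div_le_div₀ (Real.sqrt_nonneg _) hnum hc1 hden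
end

section
/- Given data matrices Φ_0, …, Φ_P ∈ ℝ^{M×N}, matrices C⁽¹⁾, …, C⁽ᴹ⁾ ∈ ℝ^{N×n}, a matrix Ā ∈ ℝ^{n×n}, and a constant β ≥ 0, let Θ∘ ∈ ℝ^{N×n} satisfy det(Θ∘ᵀC⁽ⁱ⁾ + C⁽ⁱ⁾ᵀΘ∘ − I) ≥ 1 for all i (so its barrier term vanishes in J_μ for every μ), and set J∘ := (1/(2MP))·Σ_{k=1}^{P} ‖Φ_kΘ∘ − Φ_{k−1}Θ∘Āᵀ‖_F² + (β/2)‖Θ∘‖_F², assumed positive. Suppose that for every μ > 0 there is Θ_μ ∈ ℝ^{N×n} with each Θ_μᵀC⁽ⁱ⁾ + C⁽ⁱ⁾ᵀΘ_μ − I positive definite and J_μ(Θ_μ) ≤ J_μ(Θ∘) = J∘. Then the infimum over μ > 0 of L(Θ_μ)² is at most 2·J∘. -/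
open Matrix

section Aux

variable {m : Type*} [Fintype m] [DecidableEq m]

lemma det_one_add_isHermitian {A : Matrix m m ℝ} (hA : A.IsHermitian) :
    (1 + A).det = ∏ i, (1 + hA.eigenvalues i) := by
  set U : Matrix m m ℝ := (hA.eigenvectorUnitary : Matrix m m ℝ)
  have hUU : U * star U = 1 := (Matrix.mem_unitaryGroup_iff).mp hA.eigenvectorUnitary.2
  have key : (1 : Matrix m m ℝ) + A =
      U * (1 + diagonal (RCLike.ofReal ∘ hA.eigenvalues)) * star U := by
    rw [mul_add, mul_one, add_mul, hUU]
    conv_lhs => rw [hA.spectral_theorem, Unitary.conjStarAlgAut_apply]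
  rw [key, det_mul_right_comm, hUU, one_mul]
  have : (1 : Matrix m m ℝ) + diagonal (RCLike.ofReal ∘ hA.eigenvalues) =
      diagonal (fun i => 1 + hA.eigenvalues i) := by
    rw [← diagonal_one, diagonal_add]
    rfl
  rw [this, det_diagonal]

lemma one_le_det_one_add_s5 {A : Matrix m m ℝ} (hA : A.PosSemidef) :
    1 ≤ (1 + A).det := by
  rw [det_one_add_isHermitian hA.isHermitian]
  calc (1:ℝ) = ∏ _i : m, 1 := by simp
  _ ≤ ∏ i, (1 + hA.isHermitian.eigenvalues i) :=
    Finset.prod_le_prod (fun i _ => zero_le_one)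
      (fun i _ => by linarith [hA.eigenvalues_nonneg i])

lemma posDef_half_smul {A : Matrix m m ℝ} (hA : A.PosDef) :
    ((1/2 : ℝ) • A).PosDef := by
  constructor
  · have h := hA.isHermitian
    rw [Matrix.IsHermitian, conjTranspose_eq_transpose_of_trivial] at h ⊢
    rw [transpose_smul, h]
  · intro x hx
    exact (hA.smul (by norm_num : (0:ℝ) < 1/2)).2 hx

open scoped MatrixOrder in
lemma ostrowski_taussky {S : Matrix m m ℝ}
    (hpd : ((1/2 : ℝ) • (S + Sᵀ)).PosDef) :
    ((1/2 : ℝ) • (S + Sᵀ)).det ≤ |S.det| := by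
  set H : Matrix m m ℝ := (1/2 : ℝ) • (S + Sᵀ) with hHdef
  have hHsymm : Hᵀ = H := by
    rw [hHdef, transpose_smul, transpose_add, transpose_transpose, add_comm]
  set R : Matrix m m ℝ := CFC.sqrt H with hRdef
  have hRps : R.PosSemidef := (CFC.sqrt_nonneg H).posSemidef
  have hRR : R * R = H := CFC.sqrt_mul_sqrt_self H hpd.posSemidef.nonneg
  have hRsymm : Rᵀ = R := by
    have := hRps.isHermitian
    rwa [Matrix.IsHermitian, conjTranspose_eq_transpose_of_trivial] at this
  have hHdetpos : 0 < H.det := hpd.det_pos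
  have hRdetsq : R.det * R.det = H.det := by rw [← det_mul, hRR]
  have hRdet : IsUnit R.det := by
    refine isUnit_iff_ne_zero.mpr fun h => ?_
    rw [h, zero_mul] at hRdetsq
    exact hHdetpos.ne hRdetsq
  have hRinv : R⁻¹ * R = 1 := nonsing_inv_mul R hRdet
  have hRinv' : R * R⁻¹ = 1 := mul_nonsing_inv R hRdet
  have hRinvsymm : (R⁻¹)ᵀ = R⁻¹ := by rw [transpose_nonsing_inv, hRsymm]
  set K : Matrix m m ℝ := R⁻¹ * (S - H) * R⁻¹ with hKdef
  have hKskew : Kᵀ = -K := by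
    have hSH : (S - H)ᵀ = -(S - H) := by
      rw [transpose_sub, hHsymm, hHdef]
      ext i j
      simp [Matrix.sub_apply, Matrix.smul_apply, Matrix.add_apply, Matrix.neg_apply]
      ring
    rw [hKdef, transpose_mul, transpose_mul, hRinvsymm, hSH]
    noncomm_ring
  set E : Matrix m m ℝ := R⁻¹ * S * R⁻¹ with hEdef
  have hE1 : E = 1 + K := by
    have hmid : R⁻¹ * H * R⁻¹ = 1 := by
      calc R⁻¹ * H * R⁻¹ = (R⁻¹ * R) * (R * R⁻¹) := by rw [← hRR]; noncomm_ring
      _ = 1 := by rw [hRinv, hRinv', one_mul]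
    have hS : H + (S - H) = S := by abel
    calc E = R⁻¹ * (H + (S - H)) * R⁻¹ := by rw [hS, hEdef]
    _ = R⁻¹ * H * R⁻¹ + R⁻¹ * (S - H) * R⁻¹ := by noncomm_ring
    _ = 1 + K := by rw [hmid, hKdef]
  have hdetS : S.det = H.det * E.det := by
    have hSrec : R * E * R = S := by
      rw [hEdef, ← mul_assoc, ← mul_assoc, hRinv', one_mul, mul_assoc, hRinv, mul_one]
    calc S.det = (R * E * R).det := by rw [hSrec]
    _ = R.det * E.det * R.det := by rw [det_mul, det_mul]
    _ = H.det * E.det := by rw [← hRdetsq]; ring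
  have hEsq : E.det ^ 2 = (1 + Kᵀ * K).det := by
    have hEET : E * Eᵀ = 1 + Kᵀ * K := by
      rw [hE1, transpose_add, transpose_one, hKskew]
      noncomm_ring
    calc E.det ^ 2 = E.det * Eᵀ.det := by rw [det_transpose, sq]
    _ = (E * Eᵀ).det := (det_mul _ _).symm
    _ = (1 + Kᵀ * K).det := by rw [hEET]
  have hEge : 1 ≤ E.det ^ 2 := by
    rw [hEsq]
    have : (Kᵀ * K).PosSemidef := by
      have := posSemidef_conjTranspose_mul_self (K : Matrix m m ℝ)
      rwa [conjTranspose_eq_transpose_of_trivial] at this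
    exact one_le_det_one_add_s5 this
  have hEabs : 1 ≤ |E.det| := by nlinarith [sq_abs E.det, abs_nonneg E.det]
  calc H.det = H.det * 1 := by ring
  _ ≤ H.det * |E.det| := by nlinarith
  _ = |S.det| := by rw [hdetS, abs_mul, abs_of_pos hHdetpos]

lemma sqrt_det_le_det_half {T : Matrix m m ℝ} (hT : T.PosDef) :
    Real.sqrt T.det ≤ ((1/2 : ℝ) • (T + 1)).det := by
  have hherm := hT.isHermitian
  have hdet1 : ((1/2 : ℝ) • (T + 1)).det
      = ∏ i, ((1 + hherm.eigenvalues i) / 2) := by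
    rw [det_smul, add_comm T 1, det_one_add_isHermitian hherm]
    rw [← Finset.card_univ, ← Finset.prod_const (1/2 : ℝ), ← Finset.prod_mul_distrib]
    exact Finset.prod_congr rfl fun i _ => by ring
  have hdet2 : Real.sqrt T.det = ∏ i, Real.sqrt (hherm.eigenvalues i) := by
    have hTd : T.det = ∏ i, hherm.eigenvalues i := by
      have := hherm.det_eq_prod_eigenvalues
      simpa using this
    have hsq : (∏ i, Real.sqrt (hherm.eigenvalues i)) ^ 2 = ∏ i, hherm.eigenvalues i := by
      rw [← Finset.prod_pow]
      exact Finset.prod_congr rfl fun i _ =>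
        Real.sq_sqrt (hT.eigenvalues_pos i).le
    rw [hTd, ← hsq, Real.sqrt_sq (Finset.prod_nonneg fun i _ => Real.sqrt_nonneg _)]
  rw [hdet1, hdet2]
  refine Finset.prod_le_prod (fun i _ => Real.sqrt_nonneg _) fun i _ => ?_
  have h1 := Real.sq_sqrt (hT.eigenvalues_pos i).le
  nlinarith [Real.sqrt_nonneg (hherm.eigenvalues i), sq_nonneg (1 - Real.sqrt (hherm.eigenvalues i))]

lemma exp_le_abs_det {S : Matrix m m ℝ} {δ : ℝ}
    (hpd : (S + Sᵀ - 1).PosDef) (hd : Real.exp (-δ) ≤ (S + Sᵀ - 1).det) :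
    Real.exp (-δ / 2) ≤ |S.det| := by
  have hHeq : (1/2 : ℝ) • (S + Sᵀ) = (1/2 : ℝ) • ((S + Sᵀ - 1) + 1) := by
    congr 1; abel
  have hHpd : ((1/2 : ℝ) • (S + Sᵀ)).PosDef := by
    rw [hHeq]
    exact posDef_half_smul (hpd.add Matrix.PosDef.one)
  have h1 : Real.exp (-δ / 2) ≤ Real.sqrt (S + Sᵀ - 1).det := by
    have : Real.exp (-δ) = (Real.exp (-δ / 2)) ^ 2 := by
      rw [sq, ← Real.exp_add]; ring_nf
    calc Real.exp (-δ / 2) = Real.sqrt ((Real.exp (-δ / 2)) ^ 2) :=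
          (Real.sqrt_sq (Real.exp_nonneg _)).symm
    _ ≤ Real.sqrt (S + Sᵀ - 1).det := Real.sqrt_le_sqrt (by rw [← this]; exact hd)
  have h2 : Real.sqrt (S + Sᵀ - 1).det ≤ ((1/2 : ℝ) • ((S + Sᵀ - 1) + 1)).det :=
    sqrt_det_le_det_half hpd
  have h3 := ostrowski_taussky hHpd
  rw [hHeq] at h3
  linarith

end Aux

set_option maxHeartbeats 1600000 in
/-- If `Θ∘` has `det(Θ∘ᵀC⁽ⁱ⁾ + C⁽ⁱ⁾ᵀΘ∘ − I) ≥ 1` for all `i` (vanishing barrier term),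
`J∘` is its mean-squared-error-plus-regularization objective (assumed positive), and for every
`μ > 0` a matrix `Θ_μ` with positive definite `Θ_μᵀC⁽ⁱ⁾ + C⁽ⁱ⁾ᵀΘ_μ − I` achieves
`J_μ(Θ_μ) ≤ J_μ(Θ∘) = J∘`, then `inf_{μ>0} L(Θ_μ)² ≤ 2 J∘`. -/
theorem optimized_loss_le_two_Jcirc (M N n P : ℕ) (hM : 0 < M) (hP : 0 < P)
    (Φ : ℕ → Matrix (Fin M) (Fin N) ℝ) (C : Fin M → Matrix (Fin N) (Fin n) ℝ)
    (Abar : Matrix (Fin n) (Fin n) ℝ) (β : ℝ) (hβ : 0 ≤ β)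
    (Θc : Matrix (Fin N) (Fin n) ℝ)
    (hdet : ∀ i, 1 ≤ (Θcᵀ * C i + (C i)ᵀ * Θc - 1).det)
    (Jc : ℝ)
    (hJc : Jc = (1 / (2 * M * P)) * ∑ k ∈ Finset.range P,
        frobSq (Φ (k + 1) * Θc - Φ k * Θc * Abarᵀ) + (β / 2) * frobSq Θc)
    (hJcpos : 0 < Jc)
    (Θμ : ℝ → Matrix (Fin N) (Fin n) ℝ)
    (hΘμ : ∀ μ : ℝ, 0 < μ →
      (∀ i, ((Θμ μ)ᵀ * C i + (C i)ᵀ * Θμ μ - 1).PosDef) ∧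
      Jobj M N n P Φ C Abar β μ (Θμ μ) ≤ Jobj M N n P Φ C Abar β μ Θc ∧
      Jobj M N n P Φ C Abar β μ Θc = Jc) :
    sInf ((fun μ => Lscaled M N n P Φ C Abar (Θμ μ) ^ 2) '' Set.Ioi (0 : ℝ)) ≤ 2 * Jc := by
  have hMR : (0:ℝ) < M := by exact_mod_cast hM
  have hPR : (0:ℝ) < P := by exact_mod_cast hP
  -- Key uniform bound
  have key : ∀ μ : ℝ, 0 < μ →
      Lscaled M N n P Φ C Abar (Θμ μ) ^ 2 ≤ 2 * Jc * Real.exp ((M:ℝ) * Jc / μ) := by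
    intro μ hμ
    obtain ⟨hpd, hle, heq⟩ := hΘμ μ hμ
    set Θ : Matrix (Fin N) (Fin n) ℝ := Θμ μ with hΘdef
    clear_value Θ
    set δ : ℝ := (M:ℝ) * Jc / μ with hδdef
    clear_value δ
    have hδpos : 0 < δ := by rw [hδdef]; positivity
    set s : ℝ := ∑ k ∈ Finset.range P, frobSq (Φ (k+1) * Θ - Φ k * Θ * Abarᵀ) with hsdef
    clear_value s
    have hs0 : 0 ≤ s := by
      rw [hsdef]; exact Finset.sum_nonneg fun k _ => frobSq_nonneg _
    have hf0 : 0 ≤ frobSq Θ := frobSq_nonneg _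
    set b : ℝ := ∑ i, max 0 (-Real.log (Θᵀ * C i + (C i)ᵀ * Θ - 1).det) with hbdef
    clear_value b
    have hb0 : 0 ≤ b := by
      rw [hbdef]; exact Finset.sum_nonneg fun i _ => le_max_left _ _
    have hJ : (1/(2*(M:ℝ)*P)) * s + (β/2) * frobSq Θ + (μ/(M:ℝ)) * b ≤ Jc := by
      have h := hle.trans heq.le
      rw [Jobj] at h
      rw [← hsdef, ← hbdef] at h
      exact h
    have hβt : 0 ≤ (β/2) * frobSq Θ := by positivity
    have hbt : 0 ≤ (μ/(M:ℝ)) * b := by positivity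
    have hst : 0 ≤ (1/(2*(M:ℝ)*P)) * s := by positivity
    have hnum : (1/((M:ℝ)*P)) * s ≤ 2 * Jc := by
      have h1 : (1/(2*(M:ℝ)*P)) * s ≤ Jc := by linarith
      have h2 : (1/((M:ℝ)*P)) * s = 2 * ((1/(2*(M:ℝ)*P)) * s) := by
        field_simp
      linarith [h2 ▸ (by linarith : 2 * ((1/(2*(M:ℝ)*P)) * s) ≤ 2 * Jc)]
    have hbb : b ≤ (M:ℝ) * Jc / μ := by
      have h1 : (μ/(M:ℝ)) * b ≤ Jc := by linarith
      rw [le_div_iff₀ hμ]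
      have := mul_le_mul_of_nonneg_right h1 hMR.le
      calc b * μ = (μ/(M:ℝ)) * b * (M:ℝ) := by field_simp
      _ ≤ Jc * (M:ℝ) := this
      _ = (M:ℝ) * Jc := by ring
    have hdetT : ∀ i, Real.exp (-δ) ≤ (Θᵀ * C i + (C i)ᵀ * Θ - 1).det := by
      intro i
      have hterm : max 0 (-Real.log (Θᵀ * C i + (C i)ᵀ * Θ - 1).det) ≤ b := by
        rw [hbdef]
        exact Finset.single_le_sum (f := fun i => max 0
          (-Real.log (Θᵀ * C i + (C i)ᵀ * Θ - 1).det))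
          (fun j _ => le_max_left _ _) (Finset.mem_univ i)
      have hlog : -δ ≤ Real.log (Θᵀ * C i + (C i)ᵀ * Θ - 1).det := by
        have := le_max_right 0 (-Real.log (Θᵀ * C i + (C i)ᵀ * Θ - 1).det)
        rw [hδdef]
        linarith
      rw [← Real.exp_log (hpd i).det_pos]
      exact Real.exp_le_exp.mpr hlog
    have hden : ∀ i, Real.exp (-δ/2) ≤ |(Θᵀ * C i).det| := by
      intro i
      have hST : Θᵀ * C i + (Θᵀ * C i)ᵀ - 1 = Θᵀ * C i + (C i)ᵀ * Θ - 1 := by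
        rw [transpose_mul, transpose_transpose]
      exact exp_le_abs_det (by rw [hST]; exact hpd i) (by rw [hST]; exact hdetT i)
    set d : ℝ := (1/(M:ℝ)) * ∑ i, |(Θᵀ * C i).det| with hddef
    clear_value d
    have hdge : Real.exp (-δ/2) ≤ d := by
      have hsum : (M:ℝ) * Real.exp (-δ/2) ≤ ∑ i, |(Θᵀ * C i).det| := by
        calc (M:ℝ) * Real.exp (-δ/2) = ∑ _i : Fin M, Real.exp (-δ/2) := by
              rw [Finset.sum_const, Finset.card_univ, Fintype.card_fin, nsmul_eq_mul]
        _ ≤ _ := Finset.sum_le_sum fun i _ => hden i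
      calc Real.exp (-δ/2) = (1/(M:ℝ)) * ((M:ℝ) * Real.exp (-δ/2)) := by field_simp
      _ ≤ d := by
        rw [hddef]
        exact mul_le_mul_of_nonneg_left hsum (by positivity)
    have hdpos : 0 < d := lt_of_lt_of_le (Real.exp_pos _) hdge
    have hd2 : Real.exp (-δ) ≤ d ^ 2 := by
      have h1 : Real.exp (-δ/2) ^ 2 ≤ d ^ 2 :=
        pow_le_pow_left₀ (Real.exp_nonneg _) hdge 2
      have h2 : Real.exp (-δ) = Real.exp (-δ/2) ^ 2 := by
        rw [sq, ← Real.exp_add]; ring_nf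
      linarith
    have hLnum0 : 0 ≤ (1/((M:ℝ)*P)) * s := by positivity
    have hL : Lscaled M N n P Φ C Abar Θ ^ 2 = ((1/((M:ℝ)*P)) * s) / d ^ 2 := by
      rw [Lscaled, ← hsdef, ← hddef, div_pow, Real.sq_sqrt hLnum0]
    rw [hL]
    calc ((1/((M:ℝ)*P)) * s) / d ^ 2 ≤ ((1/((M:ℝ)*P)) * s) / Real.exp (-δ) :=
          div_le_div_of_nonneg_left hLnum0 (Real.exp_pos _) hd2
    _ ≤ (2 * Jc) / Real.exp (-δ) := by gcongr
    _ = 2 * Jc * Real.exp δ := by rw [Real.exp_neg, div_eq_mul_inv, inv_inv]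
  -- Conclude via `Real.sInf_le_iff`
  set f := fun μ => Lscaled M N n P Φ C Abar (Θμ μ) ^ 2 with hfdef
  have hne : (f '' Set.Ioi 0).Nonempty :=
    ⟨f 1, ⟨1, Set.mem_Ioi.mpr one_pos, rfl⟩⟩
  have hbdd : BddBelow (f '' Set.Ioi 0) := by
    refine ⟨0, ?_⟩
    rintro x ⟨μ, hμ, rfl⟩
    exact sq_nonneg _
  rw [Real.sInf_le_iff hbdd hne]
  intro ε hε
  set γ : ℝ := Real.log (1 + ε/(4*Jc)) with hγdef
  have harg1 : (0:ℝ) < 1 + ε/(4*Jc) := by positivity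
  have hγpos : 0 < γ := Real.log_pos (by rw [lt_add_iff_pos_right]; positivity)
  set μ : ℝ := (M:ℝ)*Jc/γ with hμdef
  have hμpos : 0 < μ := by positivity
  refine ⟨f μ, ⟨μ, Set.mem_Ioi.mpr hμpos, rfl⟩, ?_⟩
  have hkey := key μ hμpos
  have hargeq : (M:ℝ)*Jc/μ = γ := by
    rw [hμdef]
    field_simp
  rw [hargeq] at hkey
  have hexp : Real.exp γ = 1 + ε/(4*Jc) := Real.exp_log harg1
  calc f μ ≤ 2*Jc*Real.exp γ := hkey
  _ = 2*Jc + ε/2 := by rw [hexp]; field_simp; ring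
  _ < 2*Jc + ε := by linarith
end

section
/- Let Ā be a real n×n matrix whose operator norm (with respect to the Euclidean norm) is at most α for some α with 0 ≤ α < 1. Then for every P ≥ 1 and every finite sequence of vectors y_0, y_1, …, y_P ∈ ℝⁿ, Σ_{k=1}^{P} ‖y_k − Āᵏ y_0‖² ≤ (1 − α)⁻² · Σ_{k=1}^{P} ‖y_k − Ā y_{k−1}‖². -/
open Matrix

/-- Weighted Cauchy–Schwarz: `(∑ w a)² ≤ (∑ w)(∑ w a²)` for nonnegative weights. -/
lemma weighted_cauchy_schwarz {ι : Type*} (s : Finset ι) (w a : ι → ℝ)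
    (hw : ∀ i ∈ s, 0 ≤ w i) :
    (∑ i ∈ s, w i * a i) ^ 2 ≤ (∑ i ∈ s, w i) * ∑ i ∈ s, w i * a i ^ 2 := by
  have h := Finset.sum_mul_sq_le_sq_mul_sq s (fun i => Real.sqrt (w i))
      (fun i => Real.sqrt (w i) * a i)
  have e1 : ∀ i ∈ s, Real.sqrt (w i) * (Real.sqrt (w i) * a i) = w i * a i := by
    intro i hi; rw [← mul_assoc, Real.mul_self_sqrt (hw i hi)]
  have e2 : ∀ i ∈ s, Real.sqrt (w i) ^ 2 = w i := by
    intro i hi; rw [Real.sq_sqrt (hw i hi)]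
  have e3 : ∀ i ∈ s, (Real.sqrt (w i) * a i) ^ 2 = w i * a i ^ 2 := by
    intro i hi; rw [mul_pow, Real.sq_sqrt (hw i hi)]
  rw [Finset.sum_congr rfl e1, Finset.sum_congr rfl e2, Finset.sum_congr rfl e3] at h
  exact h

lemma geom_sum_le_inv_one_sub (α : ℝ) (h0 : 0 ≤ α) (h1 : α < 1) (m : ℕ) :
    ∑ i ∈ Finset.range m, α ^ i ≤ (1 - α)⁻¹ := by
  rw [← tsum_geometric_of_lt_one h0 h1]
  exact Summable.sum_le_tsum _ (fun i _ => by positivity) (summable_geometric_of_lt_one h0 h1)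

/-- ℓ₂-gain bound for a stable discrete-time linear system: if the Euclidean operator norm
of `Ā` is at most `α < 1`, then for any vectors `y₀, …, y_P`,
`Σ_{k=1}^P ‖y_k − Āᵏ y₀‖² ≤ (1 − α)⁻² Σ_{k=1}^P ‖y_k − Ā y_{k−1}‖²`. -/
theorem l2_gain_cumulative_prediction_bound (n : ℕ) (Abar : Matrix (Fin n) (Fin n) ℝ)
    (α : ℝ) (hα0 : 0 ≤ α) (hα1 : α < 1)
    (hnorm : ‖Matrix.toEuclideanCLM (𝕜 := ℝ) Abar‖ ≤ α)
    (P : ℕ) (hP : 1 ≤ P) (y : ℕ → EuclideanSpace ℝ (Fin n)) :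
    ∑ k ∈ Finset.range P,
        ‖y (k + 1) - Matrix.toEuclideanCLM (𝕜 := ℝ) (Abar ^ (k + 1)) (y 0)‖ ^ 2
      ≤ (1 - α)⁻¹ ^ 2 *
        ∑ k ∈ Finset.range P,
          ‖y (k + 1) - Matrix.toEuclideanCLM (𝕜 := ℝ) Abar (y k)‖ ^ 2 := by
  set T := Matrix.toEuclideanCLM (𝕜 := ℝ) Abar with hT
  set r : ℕ → EuclideanSpace ℝ (Fin n) := fun j => y (j + 1) - T (y j) with hr
  set a : ℕ → ℝ := fun j => ‖r j‖ with ha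
  have hinv : (0:ℝ) ≤ (1 - α)⁻¹ := by
    have : (0:ℝ) < 1 - α := by linarith
    positivity
  -- key identity
  have key : ∀ k : ℕ, y (k + 1) - Matrix.toEuclideanCLM (𝕜 := ℝ) (Abar ^ (k + 1)) (y 0)
      = ∑ j ∈ Finset.range (k + 1), (T ^ (k - j)) (r j) := by
    intro k
    induction k with
    | zero => simp [hr, hT, map_pow]
    | succ k ih =>
      rw [Finset.sum_range_succ]
      have hs : ∑ j ∈ Finset.range (k + 1), (T ^ (k + 1 - j)) (r j)
          = T (∑ j ∈ Finset.range (k + 1), (T ^ (k - j)) (r j)) := by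
        rw [map_sum]
        refine Finset.sum_congr rfl fun j hj => ?_
        have hjk : j ≤ k := Nat.lt_succ_iff.mp (Finset.mem_range.mp hj)
        have : k + 1 - j = (k - j) + 1 := by omega
        rw [this, pow_succ']
        rfl
      rw [hs, ← ih]
      have : Matrix.toEuclideanCLM (𝕜 := ℝ) (Abar ^ (k + 1 + 1)) (y 0)
          = T (Matrix.toEuclideanCLM (𝕜 := ℝ) (Abar ^ (k + 1)) (y 0)) := by
        rw [map_pow, map_pow, pow_succ']
        rfl
      rw [this]
      simp only [hr, Nat.sub_self, pow_zero, ContinuousLinearMap.one_apply]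
      rw [map_sub]
      abel
  -- pointwise norm bound
  have hbound : ∀ k : ℕ, ‖y (k + 1) - Matrix.toEuclideanCLM (𝕜 := ℝ) (Abar ^ (k + 1)) (y 0)‖
      ≤ ∑ j ∈ Finset.range (k + 1), α ^ (k - j) * a j := by
    intro k
    rw [key k]
    refine (norm_sum_le _ _).trans (Finset.sum_le_sum fun j hj => ?_)
    calc ‖(T ^ (k - j)) (r j)‖ ≤ ‖T ^ (k - j)‖ * ‖r j‖ :=
          ContinuousLinearMap.le_opNorm _ _
      _ ≤ α ^ (k - j) * a j := by
          apply mul_le_mul_of_nonneg_right _ (norm_nonneg _)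
          cases Nat.eq_zero_or_pos (k - j) with
          | inl h =>
            rw [h, pow_zero, pow_zero]
            exact ContinuousLinearMap.norm_id_le
          | inr h =>
            calc ‖T ^ (k - j)‖ ≤ ‖T‖ ^ (k - j) := norm_pow_le' _ h
              _ ≤ α ^ (k - j) := pow_le_pow_left₀ (norm_nonneg _) hnorm _
  -- geometric tail bound for each column of the double sum
  have hcol : ∀ j < P, ∑ k ∈ Finset.range P, (if j ≤ k then α ^ (k - j) else 0)
      ≤ (1 - α)⁻¹ := by
    intro j hj
    rw [Finset.range_eq_Ico,
      ← Finset.sum_Ico_consecutive _ (Nat.zero_le j) (le_of_lt hj)]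
    have h1 : ∑ k ∈ Finset.Ico 0 j, (if j ≤ k then α ^ (k - j) else 0) = 0 := by
      refine Finset.sum_eq_zero fun k hk => ?_
      have := Finset.mem_Ico.mp hk
      rw [if_neg (by omega : ¬ j ≤ k)]
    have h2 : ∑ k ∈ Finset.Ico j P, (if j ≤ k then α ^ (k - j) else 0)
        = ∑ i ∈ Finset.range (P - j), α ^ i := by
      rw [Finset.sum_Ico_eq_sum_range]
      refine Finset.sum_congr rfl fun i _ => ?_
      rw [if_pos (Nat.le_add_right j i), Nat.add_sub_cancel_left]
    rw [h1, h2, zero_add]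
    exact geom_sum_le_inv_one_sub α hα0 hα1 _
  -- each inner weighted sum, extended with indicators
  have hext : ∀ k < P, ∑ j ∈ Finset.range (k + 1), α ^ (k - j) * a j ^ 2
      = ∑ j ∈ Finset.range P, (if j ≤ k then α ^ (k - j) else 0) * a j ^ 2 := by
    intro k hk
    rw [show (∑ j ∈ Finset.range (k + 1), α ^ (k - j) * a j ^ 2)
        = ∑ j ∈ Finset.range (k + 1), (if j ≤ k then α ^ (k - j) else 0) * a j ^ 2 from
      Finset.sum_congr rfl fun j hj =>
        by rw [if_pos (Nat.lt_succ_iff.mp (Finset.mem_range.mp hj))]]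
    refine Finset.sum_subset (Finset.range_subset_range.mpr hk) fun j _ hj => ?_
    have hjk : ¬ j ≤ k := by
      have := Finset.mem_range.not.mp hj; omega
    rw [if_neg hjk, zero_mul]
  calc ∑ k ∈ Finset.range P,
        ‖y (k + 1) - Matrix.toEuclideanCLM (𝕜 := ℝ) (Abar ^ (k + 1)) (y 0)‖ ^ 2
      ≤ ∑ k ∈ Finset.range P, (1 - α)⁻¹ * ∑ j ∈ Finset.range (k + 1), α ^ (k - j) * a j ^ 2 := by
        refine Finset.sum_le_sum fun k _ => ?_
        calc ‖y (k + 1) - Matrix.toEuclideanCLM (𝕜 := ℝ) (Abar ^ (k + 1)) (y 0)‖ ^ 2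
            ≤ (∑ j ∈ Finset.range (k + 1), α ^ (k - j) * a j) ^ 2 :=
              pow_le_pow_left₀ (norm_nonneg _) (hbound k) 2
          _ ≤ (∑ j ∈ Finset.range (k + 1), α ^ (k - j)) *
                ∑ j ∈ Finset.range (k + 1), α ^ (k - j) * a j ^ 2 :=
              weighted_cauchy_schwarz _ _ _ (fun j _ => by positivity)
          _ ≤ (1 - α)⁻¹ * ∑ j ∈ Finset.range (k + 1), α ^ (k - j) * a j ^ 2 := by
              refine mul_le_mul_of_nonneg_right ?_
                (Finset.sum_nonneg fun j _ => by positivity)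
              have hrefl : ∑ j ∈ Finset.range (k + 1), α ^ (k - j)
                  = ∑ j ∈ Finset.range (k + 1), α ^ j := by
                have h := Finset.sum_range_reflect (fun i => α ^ i) (k + 1)
                simpa using h
              rw [hrefl]
              exact geom_sum_le_inv_one_sub α hα0 hα1 (k + 1)
    _ = (1 - α)⁻¹ * ∑ j ∈ Finset.range P,
          (∑ k ∈ Finset.range P, (if j ≤ k then α ^ (k - j) else 0)) * a j ^ 2 := by
        rw [← Finset.mul_sum]
        congr 1
        calc ∑ k ∈ Finset.range P, ∑ j ∈ Finset.range (k + 1), α ^ (k - j) * a j ^ 2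
            = ∑ k ∈ Finset.range P, ∑ j ∈ Finset.range P,
                (if j ≤ k then α ^ (k - j) else 0) * a j ^ 2 :=
              Finset.sum_congr rfl fun k hk => hext k (Finset.mem_range.mp hk)
          _ = ∑ j ∈ Finset.range P, ∑ k ∈ Finset.range P,
                (if j ≤ k then α ^ (k - j) else 0) * a j ^ 2 := Finset.sum_comm
          _ = ∑ j ∈ Finset.range P,
                (∑ k ∈ Finset.range P, (if j ≤ k then α ^ (k - j) else 0)) * a j ^ 2 :=
              Finset.sum_congr rfl fun j _ => (Finset.sum_mul _ _ _).symm
    _ ≤ (1 - α)⁻¹ * ∑ j ∈ Finset.range P, (1 - α)⁻¹ * a j ^ 2 := by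
        refine mul_le_mul_of_nonneg_left (Finset.sum_le_sum fun j hj => ?_) hinv
        exact mul_le_mul_of_nonneg_right (hcol j (Finset.mem_range.mp hj)) (by positivity)
    _ = (1 - α)⁻¹ ^ 2 * ∑ k ∈ Finset.range P,
          ‖y (k + 1) - Matrix.toEuclideanCLM (𝕜 := ℝ) Abar (y k)‖ ^ 2 := by
        rw [← Finset.mul_sum, ← mul_assoc, ← sq]
end

section
/- Let (X, Σ) be a measurable space, ρ a probability measure on X, T_0 = id and T_1, …, T_P : X → X measurable maps, h : X → ℝⁿ a measurable map, and Ā a real n×n matrix. Define g(x) := (1/P)·Σ_{k=1}^{P} ‖h(T_k x) − Ā h(T_{k−1} x)‖² and let d : X → ℝ be measurable. Assume 0 ≤ g(x) ≤ F and 0 ≤ d(x) ≤ H for all x ∈ X, with F, H > 0. Fix L ≥ 0, δ₁, δ₂ ∈ (0,1), and M ≥ 1. Then, with respect to the M-fold product measure ρ^{⊗M} on X^M, the set of samples (x₁, …, x_M) for which the following implication holds has measure at least 1 − δ₁ − δ₂: if (1/M)·Σ_{i=1}^{M} g(x_i) ≤ L² · ((1/M)·Σ_{i=1}^{M} d(x_i))²,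 then ∫ g dρ ≤ L² · (∫ d dρ + H·√(log(1/δ₂)/(2M)))² + F·√(log(1/δ₁)/(2M)). -/
open Matrix MeasureTheory

section HoeffdingAux

open Real ProbabilityTheory


lemma hoeff_core {p : ℝ} (hp0 : 0 ≤ p) (hp1 : p ≤ 1) {u : ℝ} (hu : 0 ≤ u) :
    Real.log (1 - p + p * Real.exp u) ≤ p * u + u ^ 2 / 8 := by
  set D : ℝ → ℝ := fun v => 1 - p + p * Real.exp v with hD
  have hDpos : ∀ v, 0 < D v := by
    intro v
    rcases eq_or_lt_of_le hp0 with h0 | h0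
    · simp [hD, ← h0]
    · have : 0 < p * Real.exp v := mul_pos h0 (Real.exp_pos v)
      have : (0:ℝ) ≤ 1 - p := by linarith
      simp only [hD]; nlinarith
  set ψ₁ : ℝ → ℝ := fun v => p + v / 4 - p * Real.exp v / D v with hψ₁
  set ψ : ℝ → ℝ := fun v => p * v + v ^ 2 / 8 - Real.log (D v) with hψ
  have hDderiv : ∀ v, HasDerivAt D (p * Real.exp v) v := by
    intro v
    exact ((Real.hasDerivAt_exp v).const_mul p).const_add (1 - p)
  have hψderiv : ∀ v, HasDerivAt ψ (ψ₁ v) v := by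
    intro v
    have h1 : HasDerivAt (fun v : ℝ => p * v + v ^ 2 / 8) (p + v / 4) v := by
      have := ((hasDerivAt_id v).const_mul p).add
        (((hasDerivAt_pow 2 v)).div_const 8)
      exact this.congr_deriv (by ring)
    have h2 : HasDerivAt (fun v => Real.log (D v)) (p * Real.exp v / D v) v :=
      (hDderiv v).log (hDpos v).ne'
    exact h1.sub h2
  have hψ₁deriv : ∀ v, HasDerivAt ψ₁
      (1 / 4 - p * (1 - p) * Real.exp v / (D v) ^ 2) v := by
    intro v
    have h2 : HasDerivAt (fun v => p * Real.exp v / D v)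
        ((p * Real.exp v * D v - p * Real.exp v * (p * Real.exp v)) / (D v) ^ 2) v :=
      ((Real.hasDerivAt_exp v).const_mul p).div (hDderiv v) (hDpos v).ne'
    have h1 : HasDerivAt (fun v : ℝ => p + v / 4) (1 / 4) v := by
      simpa using ((hasDerivAt_id v).div_const 4).const_add p
    have := h1.sub h2
    refine this.congr_deriv ?_
    have hd := (hDpos v).ne'
    field_simp
    simp only [hD]
    ring
  have hψ₁nonneg : ∀ v, 0 ≤ v → 0 ≤ ψ₁ v := by
    intro v hv
    have hmono : Monotone ψ₁ := by
      apply monotone_of_deriv_nonneg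
      · intro x; exact (hψ₁deriv x).differentiableAt
      · intro x
        rw [(hψ₁deriv x).deriv]
        have hD2 : (0:ℝ) < (D x) ^ 2 := pow_pos (hDpos x) 2
        rw [sub_nonneg, div_le_iff₀ hD2]
        simp only [hD]
        nlinarith [sq_nonneg ((1 - p) - p * Real.exp x), Real.exp_pos x]
    have h0 : ψ₁ 0 = 0 := by
      simp only [hψ₁, hD, Real.exp_zero, mul_one]
      have : 1 - p + p = 1 := by ring
      rw [this]; simp
    calc (0:ℝ) = ψ₁ 0 := h0.symm
    _ ≤ ψ₁ v := hmono hv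
  have hψnonneg : 0 ≤ ψ u := by
    have hmono : MonotoneOn ψ (Set.Ici 0) := by
      apply monotoneOn_of_deriv_nonneg (convex_Ici 0)
      · exact (Continuous.continuousOn (by
          fun_prop (disch := intro x; exact (hDpos x).ne')))
      · intro x hx; exact ((hψderiv x).differentiableAt).differentiableWithinAt
      · intro x hx
        rw [(hψderiv x).deriv]
        exact hψ₁nonneg x (le_of_lt (by simpa using hx))
    have h0 : ψ 0 = 0 := by
      simp only [hψ, hD, Real.exp_zero, mul_one]
      have : 1 - p + p = 1 := by ring
      rw [this]; simp
    calc (0:ℝ) = ψ 0 := h0.symm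
    _ ≤ ψ u := hmono Set.self_mem_Ici hu hu
  have := hψnonneg
  simp only [hψ, hD] at this
  linarith


lemma integrable_of_bdd {X : Type*} [MeasurableSpace X] {ρ : Measure X}
    [IsProbabilityMeasure ρ] {f : X → ℝ} (hf : Measurable f) {C : ℝ}
    (hb : ∀ x, |f x| ≤ C) : Integrable f ρ :=
  Integrable.mono' (integrable_const C) hf.aestronglyMeasurable
    (Filter.Eventually.of_forall hb)

lemma mgf_bound {X : Type*} [MeasurableSpace X] (ρ : Measure X) [IsProbabilityMeasure ρ]
    {f : X → ℝ} (hf : Measurable f) {C : ℝ} (hC : 0 < C)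
    (hfb : ∀ x, 0 ≤ f x ∧ f x ≤ C) {s : ℝ} (hs : 0 ≤ s) :
    ∫ x, Real.exp (s * f x) ∂ρ ≤ Real.exp (s * ∫ x, f x ∂ρ + s ^ 2 * C ^ 2 / 8) := by
  have hintf : Integrable f ρ := integrable_of_bdd hf
    (fun x => abs_le.mpr ⟨by linarith [(hfb x).1], (hfb x).2⟩)
  set E := ∫ x, f x ∂ρ with hE
  have hE0 : 0 ≤ E := integral_nonneg fun x => (hfb x).1
  have hEC : E ≤ C := by
    have := integral_mono hintf (integrable_const C) fun x => (hfb x).2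
    simpa using this
  have hintexp : Integrable (fun x => Real.exp (s * f x)) ρ :=
    integrable_of_bdd (Real.measurable_exp.comp (hf.const_mul s))
      (fun x => by
        rw [abs_of_pos (Real.exp_pos _)]
        exact Real.exp_le_exp.mpr (mul_le_mul_of_nonneg_left (hfb x).2 hs))
  have hptwise : ∀ x, Real.exp (s * f x) ≤ 1 + (Real.exp (s * C) - 1) / C * f x := by
    intro x
    obtain ⟨h0, h1⟩ := hfb x
    have ha : (0:ℝ) ≤ 1 - f x / C := by
      rw [sub_nonneg, div_le_one hC]; exact h1
    have hb : 0 ≤ f x / C := div_nonneg h0 hC.le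
    have hab : (1 - f x / C) + f x / C = 1 := by ring
    have := convexOn_exp.2 (Set.mem_univ (0:ℝ)) (Set.mem_univ (s * C)) ha hb hab
    simp only [smul_eq_mul, mul_zero, zero_add, Real.exp_zero, mul_one] at this
    have harg : f x / C * (s * C) = s * f x := by field_simp
    rw [harg] at this
    calc Real.exp (s * f x) ≤ (1 - f x / C) + f x / C * Real.exp (s * C) := this
    _ = 1 + (Real.exp (s * C) - 1) / C * f x := by field_simp; ring
  have hint2 : Integrable (fun x => 1 + (Real.exp (s * C) - 1) / C * f x) ρ :=
    (integrable_const 1).add (hintf.const_mul _)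
  have hstep : ∫ x, Real.exp (s * f x) ∂ρ ≤ 1 + (Real.exp (s * C) - 1) / C * E := by
    calc ∫ x, Real.exp (s * f x) ∂ρ
        ≤ ∫ x, (1 + (Real.exp (s * C) - 1) / C * f x) ∂ρ :=
          integral_mono hintexp hint2 hptwise
    _ = 1 + (Real.exp (s * C) - 1) / C * E := by
          rw [integral_add (integrable_const 1) (hintf.const_mul _),
            integral_const_mul]
          simp [hE]
  refine hstep.trans ?_
  set p := E / C with hp
  have hp0 : 0 ≤ p := div_nonneg hE0 hC.le
  have hp1 : p ≤ 1 := by rw [hp, div_le_one hC]; exact hEC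
  have hu : 0 ≤ s * C := mul_nonneg hs hC.le
  have key := hoeff_core hp0 hp1 hu
  have heq1 : 1 + (Real.exp (s * C) - 1) / C * E = 1 - p + p * Real.exp (s * C) := by
    rw [hp]; field_simp; ring
  have heq2 : p * (s * C) + (s * C) ^ 2 / 8 = s * E + s ^ 2 * C ^ 2 / 8 := by
    rw [hp]; field_simp
  rw [heq2] at key
  have hpos : 0 < 1 - p + p * Real.exp (s * C) := by
    rcases eq_or_lt_of_le hp0 with h0 | h0
    · simp [← h0]
    · nlinarith [Real.exp_pos (s * C)]
  rw [heq1]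
  exact (Real.log_le_iff_le_exp hpos).mp key



lemma upper_tail {X : Type*} [MeasurableSpace X] (ρ : Measure X) [IsProbabilityMeasure ρ]
    {f : X → ℝ} (hf : Measurable f) {C : ℝ} (hC : 0 < C)
    (hfb : ∀ x, 0 ≤ f x ∧ f x ≤ C) (M : ℕ) (hM : 1 ≤ M)
    {δ : ℝ} (hδ : δ ∈ Set.Ioo (0:ℝ) 1) :
    Measure.pi (fun _ : Fin M => ρ)
      {xs | (M:ℝ) * (∫ x, f x ∂ρ + C * Real.sqrt (Real.log (1/δ) / (2*M))) ≤ ∑ i, f (xs i)}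
      ≤ ENNReal.ofReal δ := by
  set μ := Measure.pi (fun _ : Fin M => ρ) with hμ
  haveI : IsProbabilityMeasure μ := by
    rw [hμ]; infer_instance
  set E := ∫ x, f x ∂ρ with hE
  have hMpos : (0:ℝ) < M := by exact_mod_cast hM
  have hlognn : 0 ≤ Real.log (1/δ) :=
    Real.log_nonneg (one_le_one_div hδ.1 hδ.2.le)
  have hargnn : 0 ≤ Real.log (1/δ) / (2*M) := by positivity
  set t := C * Real.sqrt (Real.log (1/δ) / (2*M)) with ht
  have ht0 : 0 ≤ t := mul_nonneg hC.le (Real.sqrt_nonneg _)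
  have ht2 : t ^ 2 = C ^ 2 * (Real.log (1/δ) / (2*M)) := by
    rw [ht, mul_pow, Real.sq_sqrt hargnn]
  set s := 4 * t / C ^ 2 with hs
  have hs0 : 0 ≤ s := by positivity
  set Y : (Fin M → X) → ℝ := fun xs => ∑ i, f (xs i) with hY
  have hYmeas : Measurable Y :=
    Finset.measurable_sum _ fun i _ => hf.comp (measurable_pi_apply i)
  have hYbdd : ∀ xs, Y xs ≤ M * C := by
    intro xs
    calc Y xs ≤ ∑ _i : Fin M, C := Finset.sum_le_sum fun i _ => (hfb (xs i)).2
    _ = M * C := by simp [mul_comm]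
  have hint : Integrable (fun xs => Real.exp (s * Y xs)) μ := by
    apply integrable_of_bdd (Real.measurable_exp.comp (hYmeas.const_mul s))
      (C := Real.exp (s * (M * C)))
    intro xs
    rw [Function.comp_apply, abs_of_pos (Real.exp_pos _)]
    exact Real.exp_le_exp.mpr (mul_le_mul_of_nonneg_left (hYbdd xs) hs0)
  set ε := (M:ℝ) * (E + t) with hε
  have hcher := measure_ge_le_exp_mul_mgf (μ := μ) (X := Y) (t := s) ε hs0 hint
  -- compute the mgf
  have hmgf : mgf Y μ s = (∫ x, Real.exp (s * f x) ∂ρ) ^ M := by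
    letI : MeasureSpace X := ⟨ρ⟩
    have hvol : μ = (volume : Measure (Fin M → X)) := rfl
    rw [mgf, hvol]
    have : ∀ xs : Fin M → X, Real.exp (s * Y xs) = ∏ i, Real.exp (s * f (xs i)) := by
      intro xs
      rw [hY, Finset.mul_sum, Real.exp_sum]
    simp_rw [this]
    have := MeasureTheory.integral_fintype_prod_eq_pow (E := X) (ι := Fin M) (μ := ρ)
      (fun x => Real.exp (s * f x))
    simp at this; exact this
  have hmgfle : mgf Y μ s ≤ Real.exp (s * E + s ^ 2 * C ^ 2 / 8) ^ M := by
    rw [hmgf]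
    exact pow_le_pow_left₀ (integral_nonneg fun x => (Real.exp_pos _).le)
      (mgf_bound ρ hf hC hfb hs0) M
  have hfinal : Real.exp (-s * ε) * Real.exp (s * E + s ^ 2 * C ^ 2 / 8) ^ M ≤ δ := by
    rw [← Real.exp_nat_mul, ← Real.exp_add]
    have hexp : -s * ε + M * (s * E + s ^ 2 * C ^ 2 / 8) = -(2 * M * t ^ 2 / C ^ 2) := by
      rw [hs, hε]; field_simp; ring
    have hexp2 : 2 * M * t ^ 2 / C ^ 2 = Real.log (1/δ) := by
      rw [ht2]; field_simp
    rw [hexp, hexp2, one_div, Real.log_inv, neg_neg, Real.exp_log hδ.1]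
  have := hcher.trans (by
    calc Real.exp (-s * ε) * mgf Y μ s
        ≤ Real.exp (-s * ε) * Real.exp (s * E + s ^ 2 * C ^ 2 / 8) ^ M := by
          exact mul_le_mul_of_nonneg_left hmgfle (Real.exp_pos _).le
    _ ≤ δ := hfinal)
  rw [ENNReal.le_ofReal_iff_toReal_le (measure_ne_top μ _) hδ.1.le]
  exact this

lemma lower_tail {X : Type*} [MeasurableSpace X] (ρ : Measure X) [IsProbabilityMeasure ρ]
    {f : X → ℝ} (hf : Measurable f) {C : ℝ} (hC : 0 < C)
    (hfb : ∀ x, 0 ≤ f x ∧ f x ≤ C) (M : ℕ) (hM : 1 ≤ M)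
    {δ : ℝ} (hδ : δ ∈ Set.Ioo (0:ℝ) 1) :
    Measure.pi (fun _ : Fin M => ρ)
      {xs | ∑ i, f (xs i) ≤ (M:ℝ) * (∫ x, f x ∂ρ - C * Real.sqrt (Real.log (1/δ) / (2*M)))}
      ≤ ENNReal.ofReal δ := by
  have hfb' : ∀ x, 0 ≤ C - f x ∧ C - f x ≤ C := fun x =>
    ⟨by linarith [(hfb x).2], by linarith [(hfb x).1]⟩
  have hintf : Integrable f ρ := integrable_of_bdd hf
    (fun x => abs_le.mpr ⟨by linarith [(hfb x).1], (hfb x).2⟩)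
  have hEsub : ∫ x, (C - f x) ∂ρ = C - ∫ x, f x ∂ρ := by
    rw [integral_sub (integrable_const C) hintf]; simp
  have hseteq :
      {xs : Fin M → X | ∑ i, f (xs i) ≤
          (M:ℝ) * (∫ x, f x ∂ρ - C * Real.sqrt (Real.log (1/δ) / (2*M)))} =
      {xs : Fin M → X | (M:ℝ) * (∫ x, (C - f x) ∂ρ +
          C * Real.sqrt (Real.log (1/δ) / (2*M))) ≤ ∑ i, (C - f (xs i))} := by
    ext xs
    have hsum : ∑ i, (C - f (xs i)) = (M:ℝ) * C - ∑ i, f (xs i) := by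
      rw [Finset.sum_sub_distrib]
      simp [mul_comm]
    simp only [Set.mem_setOf_eq, hsum, hEsub]
    constructor <;> intro h' <;> linarith
  rw [hseteq]
  exact upper_tail ρ (measurable_const.sub hf) hC hfb' M hM hδ
end HoeffdingAux

/-- Generalization bound (Theorem 3 of the paper): with probability at least `1 − δ₁ − δ₂`
over an i.i.d. sample `x₁, …, x_M ~ ρ`, if the empirical scaled-MSE inequality
`(1/M) Σᵢ g(xᵢ) ≤ L² ((1/M) Σᵢ d(xᵢ))²` holds, then
`∫ g dρ ≤ L² (∫ d dρ + H √(log(1/δ₂)/(2M)))² + F √(log(1/δ₁)/(2M))`. -/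
theorem generalization_bound
    {X : Type*} [MeasurableSpace X] (ρ : Measure X) [IsProbabilityMeasure ρ]
    (P : ℕ) (hP : 0 < P) (T : ℕ → X → X) (hT0 : T 0 = id) (hTmeas : ∀ k, Measurable (T k))
    (n : ℕ) (h : X → EuclideanSpace ℝ (Fin n)) (hmeas : Measurable h)
    (Abar : Matrix (Fin n) (Fin n) ℝ)
    (g d : X → ℝ)
    (hg : g = fun x => (1 / P : ℝ) * ∑ k ∈ Finset.range P,
        ‖h (T (k + 1) x) - Matrix.toEuclideanCLM (𝕜 := ℝ) Abar (h (T k x))‖ ^ 2)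
    (hdmeas : Measurable d)
    (F H : ℝ) (hF : 0 < F) (hH : 0 < H)
    (hgF : ∀ x, 0 ≤ g x ∧ g x ≤ F) (hdH : ∀ x, 0 ≤ d x ∧ d x ≤ H)
    (L : ℝ) (hL : 0 ≤ L)
    (δ₁ δ₂ : ℝ) (hδ₁ : δ₁ ∈ Set.Ioo (0 : ℝ) 1) (hδ₂ : δ₂ ∈ Set.Ioo (0 : ℝ) 1)
    (M : ℕ) (hM : 1 ≤ M) :
    ENNReal.ofReal (1 - δ₁ - δ₂) ≤
      Measure.pi (fun _ : Fin M => ρ)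
        {xs : Fin M → X |
          (1 / M : ℝ) * ∑ i, g (xs i) ≤ L ^ 2 * ((1 / M : ℝ) * ∑ i, d (xs i)) ^ 2 →
          ∫ x, g x ∂ρ ≤
            L ^ 2 * (∫ x, d x ∂ρ + H * Real.sqrt (Real.log (1 / δ₂) / (2 * M))) ^ 2
              + F * Real.sqrt (Real.log (1 / δ₁) / (2 * M))} := by
  have hgmeas : Measurable g := by
    rw [hg]
    refine Measurable.const_mul (Finset.measurable_sum _ fun k _ => ?_) _
    exact ((hmeas.comp (hTmeas (k + 1))).sub
      ((Matrix.toEuclideanCLM (𝕜 := ℝ) Abar).continuous.measurable.comp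
        (hmeas.comp (hTmeas k)))).norm.pow_const 2
  set μ := Measure.pi (fun _ : Fin M => ρ) with hμ
  haveI : IsProbabilityMeasure μ := by rw [hμ]; infer_instance
  have hMpos : (0:ℝ) < M := by exact_mod_cast hM
  set tF := F * Real.sqrt (Real.log (1 / δ₁) / (2 * M)) with htF
  set tH := H * Real.sqrt (Real.log (1 / δ₂) / (2 * M)) with htH
  set B₁ : Set (Fin M → X) :=
    {xs | ∑ i, g (xs i) ≤ (M:ℝ) * (∫ x, g x ∂ρ - tF)} with hB₁
  set B₂ : Set (Fin M → X) :=
    {xs | (M:ℝ) * (∫ x, d x ∂ρ + tH) ≤ ∑ i, d (xs i)} with hB₂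
  have hB₁le : μ B₁ ≤ ENNReal.ofReal δ₁ := lower_tail ρ hgmeas hF hgF M hM hδ₁
  have hB₂le : μ B₂ ≤ ENNReal.ofReal δ₂ := upper_tail ρ hdmeas hH hdH M hM hδ₂
  have hB₁m : MeasurableSet B₁ :=
    measurableSet_le (Finset.measurable_sum _ fun i _ =>
      hgmeas.comp (measurable_pi_apply i)) measurable_const
  have hB₂m : MeasurableSet B₂ :=
    measurableSet_le measurable_const (Finset.measurable_sum _ fun i _ =>
      hdmeas.comp (measurable_pi_apply i))
  have hsub : B₁ᶜ ∩ B₂ᶜ ⊆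
      {xs : Fin M → X |
        (1 / M : ℝ) * ∑ i, g (xs i) ≤ L ^ 2 * ((1 / M : ℝ) * ∑ i, d (xs i)) ^ 2 →
        ∫ x, g x ∂ρ ≤ L ^ 2 * (∫ x, d x ∂ρ + tH) ^ 2 + tF} := by
    rintro xs ⟨h1, h2⟩ hemp
    have h1' : (M:ℝ) * (∫ x, g x ∂ρ - tF) < ∑ i, g (xs i) := not_le.mp h1
    have h2' : ∑ i, d (xs i) < (M:ℝ) * (∫ x, d x ∂ρ + tH) := not_le.mp h2
    have hd0 : (0:ℝ) ≤ (1 / M : ℝ) * ∑ i, d (xs i) := by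
      have : (0:ℝ) ≤ ∑ i, d (xs i) := Finset.sum_nonneg fun i _ => (hdH (xs i)).1
      positivity
    have e1 : (1 / M : ℝ) * ∑ i, d (xs i) ≤ ∫ x, d x ∂ρ + tH := by
      rw [div_mul_eq_mul_div, one_mul, div_le_iff₀ hMpos]
      linarith
    have e2 : ∫ x, g x ∂ρ - tF ≤ (1 / M : ℝ) * ∑ i, g (xs i) := by
      rw [div_mul_eq_mul_div, one_mul, le_div_iff₀ hMpos]
      linarith
    have e3 : ((1 / M : ℝ) * ∑ i, d (xs i)) ^ 2 ≤ (∫ x, d x ∂ρ + tH) ^ 2 :=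
      pow_le_pow_left₀ hd0 e1 2
    nlinarith [mul_le_mul_of_nonneg_left e3 (sq_nonneg L)]
  have hunion : μ (B₁ ∪ B₂) ≤ ENNReal.ofReal (δ₁ + δ₂) := by
    calc μ (B₁ ∪ B₂) ≤ μ B₁ + μ B₂ := measure_union_le _ _
    _ ≤ ENNReal.ofReal δ₁ + ENNReal.ofReal δ₂ := add_le_add hB₁le hB₂le
    _ = ENNReal.ofReal (δ₁ + δ₂) := (ENNReal.ofReal_add hδ₁.1.le hδ₂.1.le).symm
  calc ENNReal.ofReal (1 - δ₁ - δ₂)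
      = 1 - ENNReal.ofReal (δ₁ + δ₂) := by
        rw [show (1 : ℝ) - δ₁ - δ₂ = 1 - (δ₁ + δ₂) by ring,
          ENNReal.ofReal_sub 1 (by linarith [hδ₁.1, hδ₂.1] : (0:ℝ) ≤ δ₁ + δ₂), ENNReal.ofReal_one]
  _ ≤ 1 - μ (B₁ ∪ B₂) := tsub_le_tsub_left hunion 1
  _ = μ ((B₁ ∪ B₂)ᶜ) := (prob_compl_eq_one_sub (hB₁m.union hB₂m)).symm
  _ ≤ _ := by
        rw [Set.compl_union]
        exact measure_mono hsub
end

section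
/- Let (X, Σ) be a measurable space, ρ a probability measure on X, T_0 = id and T_1, …, T_P : X → X measurable maps, h : X → ℝⁿ a measurable map, and Ā a real n×n matrix whose operator norm (with respect to the Euclidean norm) is at most α for some α with 0 ≤ α < 1. Define g(x) := (1/P)·Σ_{k=1}^{P} ‖h(T_k x) − Ā h(T_{k−1} x)‖² and g̃(x) := (1/P)·Σ_{k=1}^{P} ‖h(T_k x) − Āᵏ h(x)‖², and let d : X → ℝ be measurable. Assume 0 ≤ g(x) ≤ F and 0 ≤ d(x) ≤ H for all x ∈ X, with F, H > 0. Fix L ≥ 0, δ₁, δ₂ ∈ (0,1), and M ≥ 1. Then, with respect to the M-fold product measure ρ^{⊗M} on X^M, the set of samples (x₁, …, x_M) for which the following implication holds has measure at least 1 − δ₁ − δ₂: if (1/M)·Σ_{i=1}^{M} g(x_i) ≤ L² · ((1/M)·Σ_{i=1}^{M} d(x_i))², then ∫ g̃ dρ ≤ (1 − α)⁻² · [ L² · (∫ d dρ + H·√(log(1/δ₂)/(2M)))² + F·√(log(1/δ₁)/(2M)) ]. -/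
open Matrix MeasureTheory

set_option maxHeartbeats 1000000

section Auxiliary

open Real ProbabilityTheory

lemma hoeffding_scalar {p : ℝ} (hp0 : 0 ≤ p) (hp1 : p ≤ 1) (u : ℝ) :
    Real.log (1 - p + p * Real.exp u) - p * u ≤ u ^ 2 / 8 := by
  -- D v := 1 - p + p * exp v > 0
  have hD : ∀ v : ℝ, 0 < 1 - p + p * Real.exp v := by
    intro v
    rcases eq_or_lt_of_le hp0 with h | h
    · simp [← h]
    · have := mul_pos h (Real.exp_pos v)
      linarith
  set φ : ℝ → ℝ := fun v => v ^ 2 / 8 + p * v - Real.log (1 - p + p * Real.exp v) with hφ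
  set ψ : ℝ → ℝ := fun v => v / 4 + p - p * Real.exp v / (1 - p + p * Real.exp v) with hψ
  have hDer : ∀ v, HasDerivAt φ (ψ v) v := by
    intro v
    have h1 : HasDerivAt (fun w : ℝ => 1 - p + p * Real.exp w) (p * Real.exp v) v :=
      ((Real.hasDerivAt_exp v).const_mul p).const_add (1 - p)
    have h2 : HasDerivAt (fun w : ℝ => Real.log (1 - p + p * Real.exp w))
        (p * Real.exp v / (1 - p + p * Real.exp v)) v := h1.log (hD v).ne'
    have h3 : HasDerivAt (fun w : ℝ => w ^ 2 / 8 + p * w) (v / 4 + p) v := by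
      have := ((hasDerivAt_pow 2 v).div_const 8).add ((hasDerivAt_id v).const_mul p)
      exact this.congr_deriv (by norm_num <;> ring)
    exact h3.sub h2
  have hDer2 : ∀ v, HasDerivAt ψ
      (1 / 4 - p * Real.exp v * (1 - p) / (1 - p + p * Real.exp v) ^ 2) v := by
    intro v
    have h1 : HasDerivAt (fun w : ℝ => 1 - p + p * Real.exp w) (p * Real.exp v) v :=
      ((Real.hasDerivAt_exp v).const_mul p).const_add (1 - p)
    have h0 : HasDerivAt (fun w : ℝ => p * Real.exp w) (p * Real.exp v) v :=
      (Real.hasDerivAt_exp v).const_mul p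
    have hq : HasDerivAt (fun w : ℝ => p * Real.exp w / (1 - p + p * Real.exp w))
        ((p * Real.exp v * (1 - p + p * Real.exp v) - p * Real.exp v * (p * Real.exp v)) /
          (1 - p + p * Real.exp v) ^ 2) v := h0.div h1 (hD v).ne'
    have h3 : HasDerivAt (fun w : ℝ => w / 4 + p) (1 / 4) v := by
      simpa using ((hasDerivAt_id v).div_const 4).add_const p
    have := h3.sub hq
    refine this.congr_deriv ?_
    have := (hD v).ne'
    field_simp
    ring
  have hψ0 : ψ 0 = 0 := by simp [hψ]
  have hψ'nonneg : ∀ v : ℝ,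
      0 ≤ 1 / 4 - p * Real.exp v * (1 - p) / (1 - p + p * Real.exp v) ^ 2 := by
    intro v
    rw [sub_nonneg, div_le_iff₀ (pow_pos (hD v) 2)]
    nlinarith [sq_nonneg ((1 - p) - p * Real.exp v), Real.exp_pos v]
  have hψmono : Monotone ψ := by
    have : ∀ v, HasDerivAt ψ _ v := hDer2
    refine monotone_of_deriv_nonneg (fun v => (hDer2 v).differentiableAt) ?_
    intro v
    rw [(hDer2 v).deriv]
    exact hψ'nonneg v
  -- φ is monotone on [0,∞) and antitone on (-∞,0]
  have hφ0 : φ 0 = 0 := by simp [hφ]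
  have key : ∀ v : ℝ, 0 ≤ φ v := by
    intro v
    rcases le_total 0 v with hv | hv
    · have hmono : MonotoneOn φ (Set.Ici (0:ℝ)) := by
        refine monotoneOn_of_deriv_nonneg (convex_Ici 0)
          (fun w _ => (hDer w).continuousAt.continuousWithinAt)
          (fun w _ => (hDer w).differentiableAt.differentiableWithinAt) ?_
        intro w hw
        rw [(hDer w).deriv]
        have : (0:ℝ) < w := by simpa using hw
        calc (0:ℝ) = ψ 0 := hψ0.symm
          _ ≤ ψ w := hψmono this.le
      have := hmono (Set.self_mem_Ici) (Set.mem_Ici.2 hv) hv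
      linarith [hφ0 ▸ this]
    · have hanti : AntitoneOn φ (Set.Iic (0:ℝ)) := by
        refine antitoneOn_of_deriv_nonpos (convex_Iic 0)
          (fun w _ => (hDer w).continuousAt.continuousWithinAt)
          (fun w _ => (hDer w).differentiableAt.differentiableWithinAt) ?_
        intro w hw
        rw [(hDer w).deriv]
        have : w < (0:ℝ) := by simpa using hw
        calc ψ w ≤ ψ 0 := hψmono this.le
          _ = 0 := hψ0
      have := hanti (Set.mem_Iic.2 hv) (Set.self_mem_Iic) hv
      linarith [hφ0 ▸ this]
  have := key u
  simp only [hφ] at this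
  linarith

lemma integrable_of_bddM {Ω : Type*} [MeasurableSpace Ω] {μ : Measure Ω} [IsFiniteMeasure μ]
    {f : Ω → ℝ} (hf : Measurable f) {C : ℝ} (h : ∀ x, |f x| ≤ C) : Integrable f μ :=
  ⟨hf.aestronglyMeasurable, HasFiniteIntegral.of_bounded (C := C)
    (ae_of_all _ (by simpa [Real.norm_eq_abs] using h))⟩

/-- Hoeffding's lemma. -/
lemma hoeffding_mgf {Ω : Type*} [MeasurableSpace Ω] {μ : Measure Ω} [IsProbabilityMeasure μ]
    {f : Ω → ℝ} (hf : Measurable f) {a b : ℝ} (hab : ∀ x, f x ∈ Set.Icc a b)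
    (hmean : ∫ x, f x ∂μ = 0) (t : ℝ) :
    mgf f μ t ≤ Real.exp (t ^ 2 * (b - a) ^ 2 / 8) := by
  have habs : ∀ x, |f x| ≤ max |a| |b| := by
    intro x
    rcases hab x with ⟨h1, h2⟩
    rw [abs_le]
    constructor
    · calc -(max |a| |b|) ≤ -|a| := neg_le_neg (le_max_left _ _)
        _ ≤ a := neg_abs_le a
        _ ≤ f x := h1
    · exact h2.trans ((le_abs_self b).trans (le_max_right _ _))
  have hintf : Integrable f μ := integrable_of_bddM hf habs
  have ha0 : a ≤ 0 := by
    have : ∫ _, a ∂μ ≤ ∫ x, f x ∂μ := integral_mono (integrable_const a) hintf fun x => (hab x).1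
    simpa [hmean] using this
  have hb0 : 0 ≤ b := by
    have : ∫ x, f x ∂μ ≤ ∫ _, b ∂μ := integral_mono hintf (integrable_const b) fun x => (hab x).2
    simpa [hmean] using this
  rcases eq_or_lt_of_le (ha0.trans hb0) with hab' | hab'
  · -- a = b = 0, f ≡ 0
    have ha : a = 0 := le_antisymm ha0 (by rw [hab']; exact hb0)
    have hb : b = 0 := by rw [← hab', ha]
    have hfx : ∀ x, f x = 0 := fun x =>
      le_antisymm (hb ▸ (hab x).2) (ha ▸ (hab x).1)
    have : mgf f μ t = 1 := by
      unfold ProbabilityTheory.mgf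
      simp [hfx]
    rw [this]
    exact Real.one_le_exp (by positivity)
  · set p : ℝ := -a / (b - a) with hp
    set u : ℝ := t * (b - a) with hu
    have hba : (0:ℝ) < b - a := by linarith
    have hp0 : 0 ≤ p := by
      apply div_nonneg (by linarith) hba.le
    have hp1 : p ≤ 1 := by
      rw [div_le_one hba]; linarith
    have hpba : p * (b - a) = -a := by
      rw [hp, div_mul_cancel₀ _ hba.ne']
    have hpos : 0 < 1 - p + p * Real.exp u := by
      rcases eq_or_lt_of_le hp0 with h | h
      · simp [← h]
      · have := mul_pos h (Real.exp_pos u)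
        linarith
    -- pointwise convexity bound
    have hpoint : ∀ x, Real.exp (t * f x) ≤
        (b * Real.exp (t*a) - a * Real.exp (t*b)) / (b - a) +
          f x * ((Real.exp (t*b) - Real.exp (t*a)) / (b - a)) := by
      intro x
      rcases hab x with ⟨h1, h2⟩
      have hl1 : (0:ℝ) ≤ (b - f x) / (b - a) := div_nonneg (by linarith) hba.le
      have hl2 : (0:ℝ) ≤ (f x - a) / (b - a) := div_nonneg (by linarith) hba.le
      have hl3 : (b - f x) / (b - a) + (f x - a) / (b - a) = 1 := by field_simp; ring
      have hc := convexOn_exp.2 (Set.mem_univ (t*a)) (Set.mem_univ (t*b)) hl1 hl2 hl3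
      simp only [smul_eq_mul] at hc
      have harg : (b - f x) / (b - a) * (t*a) + (f x - a) / (b - a) * (t*b) = t * f x := by
        field_simp
        ring
      rw [harg] at hc
      refine hc.trans_eq ?_
      field_simp
      ring
    have hint1 : Integrable (fun x => Real.exp (t * f x)) μ := by
      refine integrable_of_bddM ((hf.const_mul t).exp) (C := Real.exp (|t| * max |a| |b|)) ?_
      intro x
      rw [abs_of_pos (Real.exp_pos _), Real.exp_le_exp]
      calc t * f x ≤ |t * f x| := le_abs_self _
        _ = |t| * |f x| := abs_mul _ _
        _ ≤ |t| * max |a| |b| := by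
            exact mul_le_mul_of_nonneg_left (habs x) (abs_nonneg t)
    have hint2 : Integrable (fun x => (b * Real.exp (t*a) - a * Real.exp (t*b)) / (b - a) +
        f x * ((Real.exp (t*b) - Real.exp (t*a)) / (b - a))) μ :=
      (integrable_const _).add (hintf.mul_const _)
    have hstep : mgf f μ t ≤ (b * Real.exp (t*a) - a * Real.exp (t*b)) / (b - a) := by
      have h1 : mgf f μ t ≤ ∫ x, ((b * Real.exp (t*a) - a * Real.exp (t*b)) / (b - a) +
          f x * ((Real.exp (t*b) - Real.exp (t*a)) / (b - a))) ∂μ :=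
        integral_mono hint1 hint2 hpoint
      rwa [integral_add (integrable_const _) (hintf.mul_const _), integral_const,
        integral_mul_const, hmean, zero_mul, add_zero, probReal_univ,
        one_smul] at h1
    have hta : t * a = -(p * u) := by
      rw [hu, hp]
      field_simp
    have htb : t * b = -(p * u) + u := by
      rw [hu, hp]
      field_simp
      ring
    have heq : (b * Real.exp (t*a) - a * Real.exp (t*b)) / (b - a) =
        Real.exp (Real.log (1 - p + p * Real.exp u) - p * u) := by
      rw [Real.exp_sub, Real.exp_log hpos, hta, htb, Real.exp_add, Real.exp_neg,
        div_eq_div_iff hba.ne' (Real.exp_ne_zero _)]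
      field_simp
      linear_combination (1 - Real.exp u) * hpba
    rw [heq] at hstep
    refine hstep.trans ?_
    rw [Real.exp_le_exp]
    have := hoeffding_scalar hp0 hp1 u
    calc Real.log (1 - p + p * Real.exp u) - p * u ≤ u ^ 2 / 8 := this
      _ = t ^ 2 * (b - a) ^ 2 / 8 := by rw [hu]; ring

lemma geom_bound {α : ℝ} (hα0 : 0 ≤ α) (hα1 : α < 1) (N : ℕ) :
    ∑ i ∈ Finset.range N, α ^ i ≤ (1 - α)⁻¹ := by
  have hsum : Summable (fun i : ℕ => α ^ i) := summable_geometric_of_lt_one hα0 hα1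
  calc ∑ i ∈ Finset.range N, α ^ i ≤ ∑' i : ℕ, α ^ i :=
        Summable.sum_le_tsum _ (fun i _ => pow_nonneg hα0 i) hsum
    _ = (1 - α)⁻¹ := tsum_geometric_of_lt_one hα0 hα1

lemma young_sum {α : ℝ} (hα0 : 0 ≤ α) (hα1 : α < 1) (P : ℕ) (a : ℕ → ℝ)
    (ha : ∀ j, 0 ≤ a j) :
    ∑ k ∈ Finset.range P, (∑ j ∈ Finset.range (k+1), α ^ (k-j) * a j) ^ 2 ≤
      (1 - α)⁻¹ ^ 2 * ∑ j ∈ Finset.range P, a j ^ 2 := by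
  have hc : (0:ℝ) ≤ (1 - α)⁻¹ := by
    rw [inv_nonneg]; linarith
  -- Cauchy-Schwarz for each k
  have hCS : ∀ k, (∑ j ∈ Finset.range (k+1), α ^ (k-j) * a j) ^ 2 ≤
      (1 - α)⁻¹ * ∑ j ∈ Finset.range (k+1), α ^ (k-j) * a j ^ 2 := by
    intro k
    have h1 := Finset.sum_mul_sq_le_sq_mul_sq (Finset.range (k+1))
      (fun j => Real.sqrt (α ^ (k-j))) (fun j => Real.sqrt (α ^ (k-j)) * a j)
    have h2 : ∀ j, Real.sqrt (α ^ (k-j)) * (Real.sqrt (α ^ (k-j)) * a j) = α ^ (k-j) * a j := by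
      intro j
      rw [← mul_assoc, Real.mul_self_sqrt (pow_nonneg hα0 _)]
    have h3 : ∀ j, Real.sqrt (α ^ (k-j)) ^ 2 = α ^ (k-j) :=
      fun j => Real.sq_sqrt (pow_nonneg hα0 _)
    have h4 : ∀ j, (Real.sqrt (α ^ (k-j)) * a j) ^ 2 = α ^ (k-j) * a j ^ 2 := by
      intro j
      rw [mul_pow, h3]
    simp only [h2, h3, h4] at h1
    calc (∑ j ∈ Finset.range (k+1), α ^ (k-j) * a j) ^ 2
        ≤ (∑ j ∈ Finset.range (k+1), α ^ (k-j)) * ∑ j ∈ Finset.range (k+1), α ^ (k-j) * a j ^ 2 :=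
          h1
      _ ≤ (1 - α)⁻¹ * ∑ j ∈ Finset.range (k+1), α ^ (k-j) * a j ^ 2 := by
          refine mul_le_mul_of_nonneg_right ?_ ?_
          · calc ∑ j ∈ Finset.range (k+1), α ^ (k-j)
                = ∑ j ∈ Finset.range (k+1), α ^ j := by
                  simpa using Finset.sum_range_reflect (fun i => α ^ i) (k+1)
              _ ≤ (1 - α)⁻¹ := geom_bound hα0 hα1 _
          · exact Finset.sum_nonneg fun j _ =>
              mul_nonneg (pow_nonneg hα0 _) (sq_nonneg _)
  -- sum over k and swap
  have hswap : ∑ k ∈ Finset.range P, ∑ j ∈ Finset.range (k+1), α ^ (k-j) * a j ^ 2 ≤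
      (1 - α)⁻¹ * ∑ j ∈ Finset.range P, a j ^ 2 := by
    have hext : ∀ k ∈ Finset.range P, ∑ j ∈ Finset.range (k+1), α ^ (k-j) * a j ^ 2 =
        ∑ j ∈ Finset.range P, if j ≤ k then α ^ (k-j) * a j ^ 2 else 0 := by
      intro k hk
      rw [Finset.mem_range] at hk
      rw [Finset.sum_ite, Finset.sum_const_zero, add_zero]
      refine (Finset.sum_congr ?_ fun _ _ => rfl).symm
      ext j
      simp only [Finset.mem_filter, Finset.mem_range, Nat.lt_succ_iff]
      omega
    rw [Finset.sum_congr rfl hext, Finset.sum_comm]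
    have hinner : ∀ j ∈ Finset.range P,
        ∑ k ∈ Finset.range P, (if j ≤ k then α ^ (k-j) * a j ^ 2 else 0) ≤
          (1 - α)⁻¹ * a j ^ 2 := by
      intro j _
      rw [Finset.sum_ite, Finset.sum_const_zero, add_zero]
      have hfilter : Finset.filter (fun k => j ≤ k) (Finset.range P) = Finset.Ico j P := by
        ext k
        simp only [Finset.mem_filter, Finset.mem_range, Finset.mem_Ico]
        omega
      rw [hfilter]
      have : ∑ k ∈ Finset.Ico j P, α ^ (k-j) * a j ^ 2 =
          (∑ i ∈ Finset.range (P - j), α ^ i) * a j ^ 2 := by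
        rw [Finset.sum_Ico_eq_sum_range, Finset.sum_mul]
        refine Finset.sum_congr rfl fun i _ => ?_
        congr 2
        omega
      rw [this]
      exact mul_le_mul_of_nonneg_right (geom_bound hα0 hα1 _) (sq_nonneg _)
    calc ∑ j ∈ Finset.range P, ∑ k ∈ Finset.range P, (if j ≤ k then α ^ (k-j) * a j ^ 2 else 0)
        ≤ ∑ j ∈ Finset.range P, (1 - α)⁻¹ * a j ^ 2 := Finset.sum_le_sum hinner
      _ = (1 - α)⁻¹ * ∑ j ∈ Finset.range P, a j ^ 2 := by rw [Finset.mul_sum]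
  calc ∑ k ∈ Finset.range P, (∑ j ∈ Finset.range (k+1), α ^ (k-j) * a j) ^ 2
      ≤ ∑ k ∈ Finset.range P, (1 - α)⁻¹ * ∑ j ∈ Finset.range (k+1), α ^ (k-j) * a j ^ 2 :=
        Finset.sum_le_sum fun k _ => hCS k
    _ = (1 - α)⁻¹ * ∑ k ∈ Finset.range P, ∑ j ∈ Finset.range (k+1), α ^ (k-j) * a j ^ 2 := by
        rw [Finset.mul_sum]
    _ ≤ (1 - α)⁻¹ * ((1 - α)⁻¹ * ∑ j ∈ Finset.range P, a j ^ 2) :=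
        mul_le_mul_of_nonneg_left hswap hc
    _ = (1 - α)⁻¹ ^ 2 * ∑ j ∈ Finset.range P, a j ^ 2 := by ring

lemma telescope_clm {E : Type*} [NormedAddCommGroup E] [NormedSpace ℝ E]
    (B : E →L[ℝ] E) (z : ℕ → E) (k : ℕ) :
    z (k+1) - (B ^ (k+1)) (z 0) =
      ∑ j ∈ Finset.range (k+1), (B ^ (k-j)) (z (j+1) - B (z j)) := by
  induction k with
  | zero => simp
  | succ k ih =>
    rw [Finset.sum_range_succ]
    have h1 : ∀ j ∈ Finset.range (k+1),
        (B ^ (k+1-j)) (z (j+1) - B (z j)) = B ((B ^ (k-j)) (z (j+1) - B (z j))) := by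
      intro j hj
      rw [Finset.mem_range, Nat.lt_succ_iff] at hj
      have : k + 1 - j = (k - j) + 1 := by omega
      rw [this, pow_succ', ContinuousLinearMap.mul_apply]
    rw [Finset.sum_congr rfl h1, ← map_sum, ← ih]
    have hpow : (B ^ (k+2)) (z 0) = B ((B ^ (k+1)) (z 0)) := by
      rw [pow_succ', ContinuousLinearMap.mul_apply]
    simp only [Nat.sub_self, pow_zero, ContinuousLinearMap.one_apply, map_sub, hpow]
    abel

lemma pow_apply_norm_le {E : Type*} [NormedAddCommGroup E] [NormedSpace ℝ E]
    (B : E →L[ℝ] E) {α : ℝ} (hB : ‖B‖ ≤ α) (hα0 : 0 ≤ α) :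
    ∀ (m : ℕ) (v : E), ‖(B ^ m) v‖ ≤ α ^ m * ‖v‖ := by
  intro m
  induction m with
  | zero => intro v; simp
  | succ m ih =>
    intro v
    rw [pow_succ, ContinuousLinearMap.mul_apply]
    calc ‖(B ^ m) (B v)‖ ≤ α ^ m * ‖B v‖ := ih (B v)
      _ ≤ α ^ m * (α * ‖v‖) := by
          refine mul_le_mul_of_nonneg_left ?_ (pow_nonneg hα0 m)
          calc ‖B v‖ ≤ ‖B‖ * ‖v‖ := B.le_opNorm v
            _ ≤ α * ‖v‖ := mul_le_mul_of_nonneg_right hB (norm_nonneg v)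
      _ = α ^ (m+1) * ‖v‖ := by ring

variable {X : Type*} [MeasurableSpace X] {ρ : Measure X} [IsProbabilityMeasure ρ] {M : ℕ}

lemma pi_map_eval (i : Fin M) :
    (Measure.pi fun _ : Fin M => ρ).map (Function.eval i) = ρ := by
  ext s hs
  rw [Measure.map_apply (measurable_pi_apply i) hs]
  have : Function.eval i ⁻¹' s =
      Set.pi Set.univ (Function.update (fun _ : Fin M => (Set.univ : Set X)) i s) := by
    ext x
    simp only [Set.mem_preimage, Set.mem_pi, Set.mem_univ, forall_true_left, Function.eval]
    constructor
    · intro hx j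
      rcases eq_or_ne j i with rfl | hj
      · simpa using hx
      · simp [Function.update_of_ne hj]
    · intro hx
      have := hx i
      simpa using this
  rw [this, Measure.pi_pi]
  classical
  rw [Fintype.prod_eq_single i (fun j hj => by simp [Function.update_of_ne hj])]
  simp

lemma iIndepFun_eval :
    iIndepFun
      (fun (i : Fin M) (xs : Fin M → X) => xs i) (Measure.pi fun _ : Fin M => ρ) := by
  classical
  rw [iIndepFun_iff_measure_inter_preimage_eq_mul]
  intro S sets hsets
  have h1 : (⋂ i ∈ S, (fun xs : Fin M → X => xs i) ⁻¹' sets i) =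
      Set.pi Set.univ (fun j => if j ∈ S then sets j else Set.univ) := by
    ext x
    simp only [Set.mem_iInter, Set.mem_preimage, Set.mem_pi, Set.mem_univ, forall_true_left]
    constructor
    · intro hx j
      by_cases hj : j ∈ S
      · simpa [hj] using hx j hj
      · simp [hj]
    · intro hx j hj
      have := hx j
      simpa [hj] using this
  rw [h1, Measure.pi_pi]
  have h2 : ∀ i ∈ S, (Measure.pi fun _ : Fin M => ρ) ((fun xs : Fin M → X => xs i) ⁻¹' sets i)
      = ρ (sets i) := by
    intro i hi
    rw [← Measure.map_apply (measurable_pi_apply i) (hsets i hi), pi_map_eval]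
  rw [Finset.prod_congr rfl h2]
  rw [← Finset.prod_filter_mul_prod_filter_not Finset.univ (· ∈ S)]
  have h3 : ∀ j ∈ Finset.univ.filter (· ∉ S), ρ (if j ∈ S then sets j else Set.univ) = 1 := by
    intro j hj
    simp only [Finset.mem_filter] at hj
    simp [hj.2]
  rw [Finset.prod_congr rfl h3]
  simp only [Finset.prod_const_one, mul_one]
  refine Finset.prod_congr ?_ (fun j hj => ?_)
  · ext j; simp
  · simp [hj]

/-- One-sided Hoeffding inequality for the i.i.d. sample. -/
lemma hoeffding_pi (f : X → ℝ) (hf : Measurable f) (a b : ℝ) (hab : ∀ x, f x ∈ Set.Icc a b)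
    (hlt : a < b) (hM : 0 < M) {ε : ℝ} (hε : 0 < ε) :
    Measure.pi (fun _ : Fin M => ρ)
      {xs : Fin M → X | (M : ℝ) * ε ≤ ∑ i, (f (xs i) - ∫ x, f x ∂ρ)} ≤
      ENNReal.ofReal (Real.exp (-(2 * M * ε ^ 2 / (b - a) ^ 2))) := by
  classical
  set μpi := Measure.pi fun _ : Fin M => ρ with hμpi
  set m : ℝ := ∫ x, f x ∂ρ with hm
  set Y : Fin M → (Fin M → X) → ℝ := fun i xs => f (xs i) - m with hY
  set S : (Fin M → X) → ℝ := fun xs => ∑ i, (f (xs i) - m) with hS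
  have hSY : ∑ i, Y i = S := by
    funext xs
    simp [hY, hS]
  have hSmeas : Measurable S := by
    apply Finset.measurable_sum
    intro i _
    exact (hf.comp (measurable_pi_apply i)).sub_const m
  set t : ℝ := 4 * ε / (b - a) ^ 2 with ht
  have hba : (0:ℝ) < b - a := by linarith
  have ht0 : 0 < t := by positivity
  have hYmeas : ∀ i, Measurable (Y i) := fun i => (hf.comp (measurable_pi_apply i)).sub_const m
  -- independence of the Y i
  have hindep : iIndepFun Y μpi := by
    have := (iIndepFun_eval (ρ := ρ) (M := M)).comp (fun _ (x : X) => f x - m)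
      (fun _ => hf.sub_const m)
    exact this
  -- bounds on Y i
  have hYbd : ∀ i xs, Y i xs ∈ Set.Icc (a - m) (b - m) := by
    intro i xs
    simp only [hY]
    exact ⟨by linarith [(hab (xs i)).1], by linarith [(hab (xs i)).2]⟩
  -- integrability of exp (t * S)
  have hint : Integrable (fun xs => Real.exp (t * S xs)) μpi := by
    refine integrable_of_bddM (hSmeas.const_mul t).exp (C := Real.exp (t * (M * (b - m)))) ?_
    intro xs
    rw [abs_of_pos (Real.exp_pos _), Real.exp_le_exp]
    refine mul_le_mul_of_nonneg_left ?_ ht0.le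
    calc S xs = ∑ i, (f (xs i) - m) := rfl
      _ ≤ ∑ _i : Fin M, (b - m) := Finset.sum_le_sum fun i _ => (hYbd i xs).2
      _ = M * (b - m) := by simp [mul_comm]; ring
  -- Chernoff
  have hchern := measure_ge_le_exp_mul_mgf (μ := μpi) (X := S) ((M:ℝ) * ε) ht0.le hint
  -- mgf of the sum
  have hmgf_one : ∀ i : Fin M, mgf (Y i) μpi t ≤ Real.exp (t ^ 2 * (b - a) ^ 2 / 8) := by
    intro i
    have hmap : mgf (Y i) μpi t = mgf (fun x => f x - m) ρ t := by
      unfold ProbabilityTheory.mgf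
      rw [← pi_map_eval (ρ := ρ) i, integral_map (measurable_pi_apply i).aemeasurable]
      exact ((hf.sub_const m).const_mul t).exp.aestronglyMeasurable
    rw [hmap]
    have hintf : Integrable f ρ := integrable_of_bddM hf (C := max |a| |b|)
      (fun x => abs_le.2 ⟨by
        calc -(max |a| |b|) ≤ -|a| := neg_le_neg (le_max_left _ _)
          _ ≤ a := neg_abs_le a
          _ ≤ f x := (hab x).1,
        (hab x).2.trans ((le_abs_self b).trans (le_max_right _ _))⟩)
    have := hoeffding_mgf (μ := ρ) (hf.sub_const m)
      (a := a - m) (b := b - m) (fun x => ⟨sub_le_sub_right (hab x).1 m,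
        sub_le_sub_right (hab x).2 m⟩)
      (by rw [integral_sub hintf (integrable_const m)]; simp [hm]) t
    simpa using this
  -- combine
  have hprod : mgf S μpi t ≤ Real.exp (t ^ 2 * (b - a) ^ 2 / 8) ^ M := by
    rw [← hSY, hindep.mgf_sum hYmeas]
    calc ∏ i : Fin M, mgf (Y i) μpi t ≤ ∏ _i : Fin M, Real.exp (t ^ 2 * (b - a) ^ 2 / 8) :=
          Finset.prod_le_prod (fun i _ => mgf_nonneg) (fun i _ => hmgf_one i)
      _ = Real.exp (t ^ 2 * (b - a) ^ 2 / 8) ^ M := by simp [Finset.prod_const]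
  have hfinal : (μpi {xs | (M:ℝ) * ε ≤ S xs}).toReal ≤
      Real.exp (-(2 * M * ε ^ 2 / (b - a) ^ 2)) := by
    refine hchern.trans ?_
    calc Real.exp (-t * ((M:ℝ) * ε)) * mgf S μpi t
        ≤ Real.exp (-t * ((M:ℝ) * ε)) * Real.exp (t ^ 2 * (b - a) ^ 2 / 8) ^ M := by
          exact mul_le_mul_of_nonneg_left hprod (Real.exp_pos _).le
      _ = Real.exp (-t * ((M:ℝ) * ε) + M * (t ^ 2 * (b - a) ^ 2 / 8)) := by
          rw [← Real.exp_nat_mul, ← Real.exp_add]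
      _ = Real.exp (-(2 * M * ε ^ 2 / (b - a) ^ 2)) := by
          congr 1
          rw [ht]
          field_simp
          ring
  have hset : {xs : Fin M → X | (M : ℝ) * ε ≤ ∑ i, (f (xs i) - m)} =
      {xs | (M:ℝ) * ε ≤ S xs} := rfl
  rw [hset]
  have hne : μpi {xs | (M:ℝ) * ε ≤ S xs} ≠ ⊤ := measure_ne_top _ _
  rw [← ENNReal.ofReal_toReal hne]
  exact ENNReal.ofReal_le_ofReal hfinal

end Auxiliary

section Main

open Real ProbabilityTheory

/-- Corollary 4 of the paper: if moreover `‖Ā‖ ≤ α < 1` (Euclidean operator norm), then with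
probability at least `1 − δ₁ − δ₂` over an i.i.d. sample, the empirical scaled-MSE inequality
implies the bound on the expected cumulative squared prediction error
`∫ g̃ dρ ≤ (1 − α)⁻² [ L² (∫ d dρ + H √(log(1/δ₂)/(2M)))² + F √(log(1/δ₁)/(2M)) ]`,
where `g̃(x) = (1/P) Σₖ ‖h(T_k x) − Āᵏ h(x)‖²`. -/
theorem generalization_bound_cumulative
    {X : Type*} [MeasurableSpace X] (ρ : Measure X) [IsProbabilityMeasure ρ]
    (P : ℕ) (hP : 0 < P) (T : ℕ → X → X) (hT0 : T 0 = id) (hTmeas : ∀ k, Measurable (T k))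
    (n : ℕ) (h : X → EuclideanSpace ℝ (Fin n)) (hmeas : Measurable h)
    (Abar : Matrix (Fin n) (Fin n) ℝ)
    (α : ℝ) (hα0 : 0 ≤ α) (hα1 : α < 1)
    (hnorm : ‖Matrix.toEuclideanCLM (𝕜 := ℝ) Abar‖ ≤ α)
    (g gtil d : X → ℝ)
    (hg : g = fun x => (1 / P : ℝ) * ∑ k ∈ Finset.range P,
        ‖h (T (k + 1) x) - Matrix.toEuclideanCLM (𝕜 := ℝ) Abar (h (T k x))‖ ^ 2)
    (hgtil : gtil = fun x => (1 / P : ℝ) * ∑ k ∈ Finset.range P,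
        ‖h (T (k + 1) x) - Matrix.toEuclideanCLM (𝕜 := ℝ) (Abar ^ (k + 1)) (h x)‖ ^ 2)
    (hdmeas : Measurable d)
    (F H : ℝ) (hF : 0 < F) (hH : 0 < H)
    (hgF : ∀ x, 0 ≤ g x ∧ g x ≤ F) (hdH : ∀ x, 0 ≤ d x ∧ d x ≤ H)
    (L : ℝ) (hL : 0 ≤ L)
    (δ₁ δ₂ : ℝ) (hδ₁ : δ₁ ∈ Set.Ioo (0 : ℝ) 1) (hδ₂ : δ₂ ∈ Set.Ioo (0 : ℝ) 1)
    (M : ℕ) (hM : 1 ≤ M) :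
    ENNReal.ofReal (1 - δ₁ - δ₂) ≤
      Measure.pi (fun _ : Fin M => ρ)
        {xs : Fin M → X |
          (1 / M : ℝ) * ∑ i, g (xs i) ≤ L ^ 2 * ((1 / M : ℝ) * ∑ i, d (xs i)) ^ 2 →
          ∫ x, gtil x ∂ρ ≤
            (1 - α)⁻¹ ^ 2 *
              (L ^ 2 * (∫ x, d x ∂ρ + H * Real.sqrt (Real.log (1 / δ₂) / (2 * M))) ^ 2
                + F * Real.sqrt (Real.log (1 / δ₁) / (2 * M)))} := by
  classical
  set B := Matrix.toEuclideanCLM (𝕜 := ℝ) Abar with hB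
  set c : ℝ := (1 - α)⁻¹ with hc
  have h1α : (0:ℝ) < 1 - α := by linarith
  have hc0 : 0 ≤ c := by rw [hc, inv_nonneg]; linarith
  have hM0 : (0:ℝ) < M := by exact_mod_cast hM
  -- pointwise contraction: gtil ≤ c² g
  have hpointwise : ∀ x, gtil x ≤ c ^ 2 * g x := by
    intro x
    set z : ℕ → EuclideanSpace ℝ (Fin n) := fun j => h (T j x) with hz
    have hz0 : z 0 = h x := by
      show h (T 0 x) = h x
      rw [hT0]
      rfl
    set a : ℕ → ℝ := fun j => ‖z (j+1) - B (z j)‖ with ha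
    have hnormk : ∀ k, ‖h (T (k + 1) x) - Matrix.toEuclideanCLM (𝕜 := ℝ) (Abar ^ (k + 1)) (h x)‖
        ≤ ∑ j ∈ Finset.range (k+1), α ^ (k-j) * a j := by
      intro k
      have hmp : Matrix.toEuclideanCLM (𝕜 := ℝ) (Abar ^ (k + 1)) = B ^ (k+1) := by
        rw [hB, map_pow]
      rw [hmp]
      have : h (T (k + 1) x) - (B ^ (k+1)) (h x) = z (k+1) - (B ^ (k+1)) (z 0) := by
        rw [hz0]
      rw [this, telescope_clm B z k]
      calc ‖∑ j ∈ Finset.range (k+1), (B ^ (k-j)) (z (j+1) - B (z j))‖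
          ≤ ∑ j ∈ Finset.range (k+1), ‖(B ^ (k-j)) (z (j+1) - B (z j))‖ :=
            norm_sum_le _ _
        _ ≤ ∑ j ∈ Finset.range (k+1), α ^ (k-j) * a j :=
            Finset.sum_le_sum fun j _ => pow_apply_norm_le B hnorm hα0 _ _
    have hterm : ∀ k, ‖h (T (k + 1) x) - Matrix.toEuclideanCLM (𝕜 := ℝ) (Abar ^ (k + 1)) (h x)‖ ^ 2
        ≤ (∑ j ∈ Finset.range (k+1), α ^ (k-j) * a j) ^ 2 := fun k =>
      pow_le_pow_left₀ (norm_nonneg _) (hnormk k) 2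
    have hy := young_sum hα0 hα1 P a (fun j => norm_nonneg _)
    rw [hgtil, hg]
    simp only
    have hsum : ∑ k ∈ Finset.range P,
        ‖h (T (k + 1) x) - Matrix.toEuclideanCLM (𝕜 := ℝ) (Abar ^ (k + 1)) (h x)‖ ^ 2 ≤
        c ^ 2 * ∑ k ∈ Finset.range P,
          ‖h (T (k + 1) x) - Matrix.toEuclideanCLM (𝕜 := ℝ) Abar (h (T k x))‖ ^ 2 := by
      calc ∑ k ∈ Finset.range P,
            ‖h (T (k + 1) x) - Matrix.toEuclideanCLM (𝕜 := ℝ) (Abar ^ (k + 1)) (h x)‖ ^ 2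
          ≤ ∑ k ∈ Finset.range P, (∑ j ∈ Finset.range (k+1), α ^ (k-j) * a j) ^ 2 :=
            Finset.sum_le_sum fun k _ => hterm k
        _ ≤ c ^ 2 * ∑ j ∈ Finset.range P, a j ^ 2 := hy
        _ = c ^ 2 * ∑ k ∈ Finset.range P,
            ‖h (T (k + 1) x) - Matrix.toEuclideanCLM (𝕜 := ℝ) Abar (h (T k x))‖ ^ 2 := rfl
    have hPinv : (0:ℝ) ≤ 1 / P := by positivity
    calc (1 / P : ℝ) * ∑ k ∈ Finset.range P,
          ‖h (T (k + 1) x) - Matrix.toEuclideanCLM (𝕜 := ℝ) (Abar ^ (k + 1)) (h x)‖ ^ 2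
        ≤ (1 / P : ℝ) * (c ^ 2 * ∑ k ∈ Finset.range P,
          ‖h (T (k + 1) x) - Matrix.toEuclideanCLM (𝕜 := ℝ) Abar (h (T k x))‖ ^ 2) :=
          mul_le_mul_of_nonneg_left hsum hPinv
      _ = c ^ 2 * ((1 / P : ℝ) * ∑ k ∈ Finset.range P,
          ‖h (T (k + 1) x) - Matrix.toEuclideanCLM (𝕜 := ℝ) Abar (h (T k x))‖ ^ 2) := by ring
  -- measurability
  have hgmeas : Measurable g := by
    rw [hg]
    refine Measurable.const_mul ?_ _
    refine Finset.measurable_sum _ fun k _ => ?_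
    exact (((hmeas.comp (hTmeas (k+1))).sub
      ((Matrix.toEuclideanCLM (𝕜 := ℝ) Abar).continuous.measurable.comp
        (hmeas.comp (hTmeas k)))).norm).pow_const 2
  have hgtilmeas : Measurable gtil := by
    rw [hgtil]
    refine Measurable.const_mul ?_ _
    refine Finset.measurable_sum _ fun k _ => ?_
    exact (((hmeas.comp (hTmeas (k+1))).sub
      ((Matrix.toEuclideanCLM (𝕜 := ℝ) (Abar ^ (k+1))).continuous.measurable.comp
        hmeas)).norm).pow_const 2
  have hgtil0 : ∀ x, 0 ≤ gtil x := by
    intro x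
    rw [hgtil]
    exact mul_nonneg (by positivity) (Finset.sum_nonneg fun k _ => sq_nonneg _)
  have hint_g : Integrable g ρ := integrable_of_bddM hgmeas (C := F)
    (fun x => abs_le.2 ⟨by linarith [(hgF x).1], (hgF x).2⟩)
  have hint_d : Integrable d ρ := integrable_of_bddM hdmeas (C := H)
    (fun x => abs_le.2 ⟨by linarith [(hdH x).1], (hdH x).2⟩)
  have hint_gtil : Integrable gtil ρ := integrable_of_bddM hgtilmeas (C := c^2 * F)
    (fun x => abs_le.2 ⟨by nlinarith [hgtil0 x, sq_nonneg c],
      (hpointwise x).trans (by nlinarith [(hgF x).2, sq_nonneg c])⟩)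
  have hIgtil : ∫ x, gtil x ∂ρ ≤ c ^ 2 * ∫ x, g x ∂ρ := by
    calc ∫ x, gtil x ∂ρ ≤ ∫ x, c ^ 2 * g x ∂ρ :=
          integral_mono hint_gtil (hint_g.const_mul _) hpointwise
      _ = c ^ 2 * ∫ x, g x ∂ρ := integral_const_mul _ _
  -- Hoeffding events
  set ε₁ : ℝ := F * Real.sqrt (Real.log (1 / δ₁) / (2 * M)) with hε₁
  set ε₂ : ℝ := H * Real.sqrt (Real.log (1 / δ₂) / (2 * M)) with hε₂
  have hlog₁ : 0 < Real.log (1 / δ₁) := by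
    apply Real.log_pos
    rw [lt_div_iff₀ hδ₁.1]
    simpa using hδ₁.2
  have hlog₂ : 0 < Real.log (1 / δ₂) := by
    apply Real.log_pos
    rw [lt_div_iff₀ hδ₂.1]
    simpa using hδ₂.2
  have hε₁0 : 0 < ε₁ := by
    apply mul_pos hF
    apply Real.sqrt_pos.2
    positivity
  have hε₂0 : 0 < ε₂ := by
    apply mul_pos hH
    apply Real.sqrt_pos.2
    positivity
  set μpi := Measure.pi (fun _ : Fin M => ρ) with hμpi
  set E₁ : Set (Fin M → X) :=
    {xs | (M : ℝ) * ε₁ ≤ ∑ i, ((fun y => -(g y)) (xs i) - ∫ x, -(g x) ∂ρ)} with hE₁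
  set E₂ : Set (Fin M → X) :=
    {xs | (M : ℝ) * ε₂ ≤ ∑ i, (d (xs i) - ∫ x, d x ∂ρ)} with hE₂
  have hbound₁ : μpi E₁ ≤ ENNReal.ofReal δ₁ := by
    have := hoeffding_pi (ρ := ρ) (M := M) (fun y => -(g y)) hgmeas.neg (-F) 0
      (fun x => ⟨by simpa using (hgF x).2, by simpa using (hgF x).1⟩) (by linarith)
      (by omega) hε₁0
    refine this.trans (le_of_eq ?_)
    congr 1
    rw [← Real.exp_log hδ₁.1]
    congr 1
    have hsq : ε₁ ^ 2 = F ^ 2 * (Real.log (1 / δ₁) / (2 * M)) := by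
      rw [hε₁, mul_pow, Real.sq_sqrt (by positivity)]
    rw [hsq]
    have : Real.log (1 / δ₁) = -Real.log δ₁ := by
      rw [one_div, Real.log_inv]
    rw [this]
    field_simp
    ring_nf
    field_simp
  have hbound₂ : μpi E₂ ≤ ENNReal.ofReal δ₂ := by
    have := hoeffding_pi (ρ := ρ) (M := M) d hdmeas 0 H
      (fun x => ⟨(hdH x).1, (hdH x).2⟩) (by linarith) (by omega) hε₂0
    refine this.trans (le_of_eq ?_)
    congr 1
    rw [← Real.exp_log hδ₂.1]
    congr 1
    have hsq : ε₂ ^ 2 = H ^ 2 * (Real.log (1 / δ₂) / (2 * M)) := by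
      rw [hε₂, mul_pow, Real.sq_sqrt (by positivity)]
    rw [hsq]
    have : Real.log (1 / δ₂) = -Real.log δ₂ := by
      rw [one_div, Real.log_inv]
    rw [this]
    field_simp
    ring_nf
    field_simp
  -- the good event implies the conclusion
  have hsubset : (E₁ ∪ E₂)ᶜ ⊆
      {xs : Fin M → X |
        (1 / M : ℝ) * ∑ i, g (xs i) ≤ L ^ 2 * ((1 / M : ℝ) * ∑ i, d (xs i)) ^ 2 →
        ∫ x, gtil x ∂ρ ≤
          (1 - α)⁻¹ ^ 2 *
            (L ^ 2 * (∫ x, d x ∂ρ + H * Real.sqrt (Real.log (1 / δ₂) / (2 * M))) ^ 2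
              + F * Real.sqrt (Real.log (1 / δ₁) / (2 * M)))} := by
    intro xs hxs
    simp only [Set.mem_compl_iff, Set.mem_union, hE₁, hE₂, Set.mem_setOf_eq, not_or,
      not_le] at hxs
    obtain ⟨h1, h2⟩ := hxs
    intro hemp
    -- from ¬E₁ : ∫ g < (1/M) Σ g + ε₁
    have hg_int : ∫ x, g x ∂ρ ≤ (1 / M : ℝ) * ∑ i, g (xs i) + ε₁ := by
      have hneg : ∫ x, -(g x) ∂ρ = -∫ x, g x ∂ρ := integral_neg _
      rw [hneg] at h1
      have hS : ∑ i : Fin M, (-(g (xs i)) - -∫ x, g x ∂ρ) =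
          (M : ℝ) * ∫ x, g x ∂ρ - ∑ i, g (xs i) := by
        rw [Finset.sum_sub_distrib]
        simp only [Finset.sum_neg_distrib, Finset.sum_const, Finset.card_univ,
          Fintype.card_fin, nsmul_eq_mul]
        try ring
      rw [hS] at h1
      have hmul : (M : ℝ) * ((1 / M : ℝ) * ∑ i, g (xs i) + ε₁) =
          ∑ i, g (xs i) + (M : ℝ) * ε₁ := by
        field_simp
      refine le_of_mul_le_mul_left ?_ hM0
      rw [hmul]
      linarith
    have hd_emp : (1 / M : ℝ) * ∑ i, d (xs i) ≤ ∫ x, d x ∂ρ + ε₂ := by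
      have hS : ∑ i : Fin M, (d (xs i) - ∫ x, d x ∂ρ) =
          ∑ i, d (xs i) - (M : ℝ) * ∫ x, d x ∂ρ := by
        rw [Finset.sum_sub_distrib]
        simp only [Finset.sum_const, Finset.card_univ, Fintype.card_fin, nsmul_eq_mul]
        try ring
      rw [hS] at h2
      have hmul : (M : ℝ) * ((1 / M : ℝ) * ∑ i, d (xs i)) = ∑ i, d (xs i) := by
        field_simp
      refine le_of_mul_le_mul_left ?_ hM0
      rw [hmul, mul_add]
      linarith
    have hd_emp0 : 0 ≤ (1 / M : ℝ) * ∑ i, d (xs i) :=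
      mul_nonneg (by positivity) (Finset.sum_nonneg fun i _ => (hdH (xs i)).1)
    have hd_int0 : 0 ≤ ∫ x, d x ∂ρ + ε₂ := hd_emp0.trans hd_emp
    have hsq : ((1 / M : ℝ) * ∑ i, d (xs i)) ^ 2 ≤ (∫ x, d x ∂ρ + ε₂) ^ 2 :=
      pow_le_pow_left₀ hd_emp0 hd_emp 2
    calc ∫ x, gtil x ∂ρ ≤ c ^ 2 * ∫ x, g x ∂ρ := hIgtil
      _ ≤ c ^ 2 * ((1 / M : ℝ) * ∑ i, g (xs i) + ε₁) :=
          mul_le_mul_of_nonneg_left hg_int (by positivity)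
      _ ≤ c ^ 2 * (L ^ 2 * ((1 / M : ℝ) * ∑ i, d (xs i)) ^ 2 + ε₁) := by
          refine mul_le_mul_of_nonneg_left (by linarith) (by positivity)
      _ ≤ c ^ 2 * (L ^ 2 * (∫ x, d x ∂ρ + ε₂) ^ 2 + ε₁) := by
          refine mul_le_mul_of_nonneg_left ?_ (by positivity)
          have := mul_le_mul_of_nonneg_left hsq (sq_nonneg L)
          linarith
      _ = (1 - α)⁻¹ ^ 2 *
            (L ^ 2 * (∫ x, d x ∂ρ + H * Real.sqrt (Real.log (1 / δ₂) / (2 * M))) ^ 2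
              + F * Real.sqrt (Real.log (1 / δ₁) / (2 * M))) := by rw [hc, hε₂, hε₁]
  -- measure arithmetic
  refine le_trans ?_ (measure_mono hsubset)
  have hunion : μpi (E₁ ∪ E₂) ≤ ENNReal.ofReal (δ₁ + δ₂) := by
    calc μpi (E₁ ∪ E₂) ≤ μpi E₁ + μpi E₂ := measure_union_le _ _
      _ ≤ ENNReal.ofReal δ₁ + ENNReal.ofReal δ₂ := add_le_add hbound₁ hbound₂
      _ = ENNReal.ofReal (δ₁ + δ₂) := (ENNReal.ofReal_add hδ₁.1.le hδ₂.1.le).symm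
  have hcover : (1 : ENNReal) ≤ μpi (E₁ ∪ E₂) + μpi (E₁ ∪ E₂)ᶜ := by
    calc (1 : ENNReal) = μpi Set.univ := (measure_univ).symm
      _ = μpi ((E₁ ∪ E₂) ∪ (E₁ ∪ E₂)ᶜ) := by rw [Set.union_compl_self]
      _ ≤ μpi (E₁ ∪ E₂) + μpi (E₁ ∪ E₂)ᶜ := measure_union_le _ _
  calc ENNReal.ofReal (1 - δ₁ - δ₂) = ENNReal.ofReal (1 - (δ₁ + δ₂)) := by ring_nf
    _ = 1 - ENNReal.ofReal (δ₁ + δ₂) := by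
        rw [ENNReal.ofReal_sub _ (by linarith [hδ₁.1.le, hδ₂.1.le] : (0:ℝ) ≤ δ₁ + δ₂), ENNReal.ofReal_one]
    _ ≤ 1 - μpi (E₁ ∪ E₂) := tsub_le_tsub_left hunion 1
    _ ≤ μpi (E₁ ∪ E₂)ᶜ := by
        rw [tsub_le_iff_right]
        calc (1:ENNReal) ≤ μpi (E₁ ∪ E₂) + μpi (E₁ ∪ E₂)ᶜ := hcover
          _ = μpi (E₁ ∪ E₂)ᶜ + μpi (E₁ ∪ E₂) := add_comm _ _

end Main
end
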